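/- arXiv:1207.5116 — 7 statements merged into one kernel-verified Lean document; each statement's English description precedes it below -/
import Mathlib

section
/- Let G₁, G₂ be finite connected graphs and G = G₁ □ G₂ their Cartesian product. Then for any x = (x₁,x₂), y = (y₁,y₂), z = (z₁,z₂) in V₁ × V₂ and any t ∈ [0,1], the binomial interpolation tensorises: ν_t^{x,y}(z) = ν_t^{x₁,y₁}(z₁) · ν_t^{x₂,y₂}(z₂). -/
open scoped Classical

/-- The number of geodesics (walks of minimal length) from `x` to `y` in `G`. -/
noncomputable def SimpleGraph.numGeodesics {V : Type*} [Fintype V]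
    (G : SimpleGraph V) (x y : V) : ℕ :=
  (G.finsetWalkLength (G.dist x y) x y).card

/-- The number of geodesics from `x` to `y` in `G` that pass through `z`. -/
noncomputable def SimpleGraph.numGeodesicsThrough {V : Type*} [Fintype V]
    (G : SimpleGraph V) (x z y : V) : ℕ :=
  ((G.finsetWalkLength (G.dist x y) x y).filter (fun p => z ∈ p.support)).card

/-- The binomial interpolation `ν_t^{x,y}(z)`: it equals
`C(d(x,y), d(x,z)) t^{d(x,z)} (1-t)^{d(z,y)} |Γ(x,z,y)|/|Γ(x,y)|` when `z` lies on some
geodesic from `x` to `y` (i.e. `d(x,z) + d(z,y) = d(x,y)`), and `0` otherwise. -/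
noncomputable def SimpleGraph.binomInterp {V : Type*} [Fintype V]
    (G : SimpleGraph V) (t : ℝ) (x y z : V) : ℝ :=
  if G.dist x z + G.dist z y = G.dist x y then
    (Nat.choose (G.dist x y) (G.dist x z) : ℝ) * t ^ (G.dist x z) * (1 - t) ^ (G.dist z y)
      * (G.numGeodesicsThrough x z y : ℝ) / (G.numGeodesics x y : ℝ)
  else 0

namespace SimpleGraph

section Auxiliary

open Finset

lemma card_finsetWalkLength_succ' {V : Type*} (G : SimpleGraph V) [DecidableEq V]
    [LocallyFinite G] (n : ℕ) (u v : V) :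
    (G.finsetWalkLength (n+1) u v).card
      = ∑ w ∈ G.neighborFinset u, (G.finsetWalkLength n w v).card := by
  rw [finsetWalkLength, Finset.card_biUnion]
  · simp_rw [Finset.card_map]
    rw [neighborFinset_def, ← Finset.sum_set_coe]
  · intro a _ b _ hab
    simp only [Finset.disjoint_left, Finset.mem_map]
    rintro p ⟨q, hq, rfl⟩ ⟨r, hr, he⟩
    apply hab
    have := congrArg (fun w => w.getVert 1) he
    change Walk.getVert r 0 = Walk.getVert q 0 at this
    simpa [Subtype.ext_iff] using this.symm

lemma card_finsetWalkLength_zero' {V : Type*} (G : SimpleGraph V) [DecidableEq V]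
    [LocallyFinite G] (u v : V) :
    (G.finsetWalkLength 0 u v).card = if u = v then 1 else 0 := by
  rw [finsetWalkLength]
  split_ifs with h
  · subst h; simp
  · simp [h]

lemma finsetWalkLength_eq_empty_of_lt' {V : Type*} (G : SimpleGraph V) [DecidableEq V]
    [LocallyFinite G] {n : ℕ} {u v : V} (h : n < G.dist u v) :
    G.finsetWalkLength n u v = ∅ := by
  ext p
  simp only [mem_finsetWalkLength_iff, Finset.notMem_empty, iff_false]
  rintro rfl
  exact absurd (G.dist_le p) (by omega)

lemma card_finsetWalkLength_dist_pos' {V : Type*} (G : SimpleGraph V) [DecidableEq V]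
    [LocallyFinite G] (hc : G.Connected) (u v : V) :
    0 < (G.finsetWalkLength (G.dist u v) u v).card := by
  obtain ⟨p, hp⟩ := (hc.preconnected u v).exists_walk_length_eq_dist
  exact Finset.card_pos.mpr ⟨p, mem_finsetWalkLength_iff.mpr hp⟩

lemma card_boxProd_finsetWalkLength' {V₁ V₂ : Type*} (G₁ : SimpleGraph V₁) (G₂ : SimpleGraph V₂)
    [DecidableEq V₁] [DecidableEq V₂] [DecidableEq (V₁ × V₂)]
    [LocallyFinite G₁] [LocallyFinite G₂] [LocallyFinite (G₁ □ G₂)]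
    (n : ℕ) (x₁ : V₁) (x₂ : V₂) (y₁ : V₁) (y₂ : V₂) :
    ((G₁ □ G₂).finsetWalkLength n (x₁, x₂) (y₁, y₂)).card
      = ∑ p ∈ Finset.HasAntidiagonal.antidiagonal n, n.choose p.1
          * (G₁.finsetWalkLength p.1 x₁ y₁).card * (G₂.finsetWalkLength p.2 x₂ y₂).card := by
  induction n generalizing x₁ x₂ with
  | zero =>
    simp only [Finset.Nat.antidiagonal_zero, Finset.sum_singleton, Nat.choose_zero_right,
      one_mul, card_finsetWalkLength_zero']
    by_cases h1 : x₁ = y₁ <;> by_cases h2 : x₂ = y₂ <;>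
      simp [h1, h2, Prod.ext_iff]
  | succ n ih =>
    rw [card_finsetWalkLength_succ', neighborFinset_boxProd, Finset.sum_disjUnion,
      Finset.sum_product, Finset.sum_product]
    simp only [Finset.sum_singleton, ih]
    rw [Finset.sum_comm (s := G₁.neighborFinset x₁), Finset.sum_comm (s := G₂.neighborFinset x₂)]
    have e₁ : ∀ p ∈ Finset.HasAntidiagonal.antidiagonal n,
        (∑ w ∈ G₁.neighborFinset x₁, n.choose p.1
          * (G₁.finsetWalkLength p.1 w y₁).card * (G₂.finsetWalkLength p.2 x₂ y₂).card)
        = n.choose p.1 * (G₁.finsetWalkLength (p.1+1) x₁ y₁).card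
            * (G₂.finsetWalkLength p.2 x₂ y₂).card := by
      intro p _
      rw [← Finset.sum_mul, ← Finset.mul_sum, card_finsetWalkLength_succ']
    have e₂ : ∀ p ∈ Finset.HasAntidiagonal.antidiagonal n,
        (∑ w ∈ G₂.neighborFinset x₂, n.choose p.1
          * (G₁.finsetWalkLength p.1 x₁ y₁).card * (G₂.finsetWalkLength p.2 w y₂).card)
        = n.choose p.1 * (G₁.finsetWalkLength p.1 x₁ y₁).card
            * (G₂.finsetWalkLength (p.2+1) x₂ y₂).card := by
      intro p _
      rw [← Finset.mul_sum, card_finsetWalkLength_succ']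
    rw [Finset.sum_congr rfl e₁, Finset.sum_congr rfl e₂]
    have key : ∀ A B : ℕ → ℕ,
        (∑ p ∈ Finset.HasAntidiagonal.antidiagonal n, n.choose p.1 * A (p.1+1) * B p.2)
        + (∑ p ∈ Finset.HasAntidiagonal.antidiagonal n, n.choose p.1 * A p.1 * B (p.2+1))
        = ∑ p ∈ Finset.HasAntidiagonal.antidiagonal (n+1), (n+1).choose p.1 * A p.1 * B p.2 := by
      intro A B
      have hU₁ : (∑ p ∈ Finset.HasAntidiagonal.antidiagonal (n+1), n.choose p.1 * A p.1 * B p.2)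
          = n.choose 0 * A 0 * B (n+1)
            + ∑ p ∈ Finset.HasAntidiagonal.antidiagonal n, n.choose (p.1+1) * A (p.1+1) * B p.2 :=
        Finset.Nat.sum_antidiagonal_succ
      have hU₂ : (∑ p ∈ Finset.HasAntidiagonal.antidiagonal (n+1), n.choose p.1 * A p.1 * B p.2)
          = n.choose (n+1) * A (n+1) * B 0
            + ∑ p ∈ Finset.HasAntidiagonal.antidiagonal n, n.choose p.1 * A p.1 * B (p.2+1) :=
        Finset.Nat.sum_antidiagonal_succ'
      rw [Finset.Nat.sum_antidiagonal_succ (f := fun p => (n+1).choose p.1 * A p.1 * B p.2)]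
      simp only [Nat.choose_succ_succ, add_mul, Finset.sum_add_distrib, Nat.choose_succ_self,
        zero_mul, zero_add, Nat.choose_zero_right, one_mul, Nat.succ_eq_add_one] at *
      omega
    exact key (fun k => (G₁.finsetWalkLength k x₁ y₁).card)
      (fun k => (G₂.finsetWalkLength k x₂ y₂).card)

lemma boxProd_dist' {V₁ V₂ : Type*} {G₁ : SimpleGraph V₁} {G₂ : SimpleGraph V₂}
    [DecidableEq V₁] [DecidableEq V₂] [DecidableEq (V₁ × V₂)]
    [LocallyFinite G₁] [LocallyFinite G₂] [LocallyFinite (G₁ □ G₂)]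
    (h₁ : G₁.Connected) (h₂ : G₂.Connected) (x₁ y₁ : V₁) (x₂ y₂ : V₂) :
    (G₁ □ G₂).dist (x₁, x₂) (y₁, y₂) = G₁.dist x₁ y₁ + G₂.dist x₂ y₂ := by
  refine le_antisymm ?_ ?_
  · obtain ⟨p, hp⟩ := (h₁.preconnected x₁ y₁).exists_walk_length_eq_dist
    obtain ⟨q, hq⟩ := (h₂.preconnected x₂ y₂).exists_walk_length_eq_dist
    have := SimpleGraph.dist_le ((p.boxProdLeft G₂ x₂).append (q.boxProdRight G₁ y₁))
    have hl : ((p.boxProdLeft G₂ x₂).append (q.boxProdRight G₁ y₁)).length = p.length + q.length := by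
      rw [Walk.length_append]; exact congrArg₂ (· + ·) (Walk.length_map _ _) (Walk.length_map _ _)
    rw [hl, hp, hq] at this
    exact this
  · have hpos := card_finsetWalkLength_dist_pos' (G₁ □ G₂) (h₁.boxProd h₂) (x₁, x₂) (y₁, y₂)
    rw [card_boxProd_finsetWalkLength'] at hpos
    obtain ⟨p, hmem, hne⟩ := Finset.exists_ne_zero_of_sum_ne_zero hpos.ne'
    rw [Finset.HasAntidiagonal.mem_antidiagonal] at hmem
    by_contra hlt
    push_neg at hlt
    rcases Nat.lt_or_ge p.1 (G₁.dist x₁ y₁) with h | h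
    · rw [finsetWalkLength_eq_empty_of_lt' G₁ h] at hne; simp at hne
    · have h2 : p.2 < G₂.dist x₂ y₂ := by omega
      rw [finsetWalkLength_eq_empty_of_lt' G₂ h2] at hne; simp at hne

lemma card_boxProd_geodesics' {V₁ V₂ : Type*} {G₁ : SimpleGraph V₁} {G₂ : SimpleGraph V₂}
    [DecidableEq V₁] [DecidableEq V₂] [DecidableEq (V₁ × V₂)]
    [LocallyFinite G₁] [LocallyFinite G₂] [LocallyFinite (G₁ □ G₂)]
    (h₁ : G₁.Connected) (h₂ : G₂.Connected) (x₁ y₁ : V₁) (x₂ y₂ : V₂) :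
    ((G₁ □ G₂).finsetWalkLength ((G₁ □ G₂).dist (x₁, x₂) (y₁, y₂)) (x₁, x₂) (y₁, y₂)).card
      = (G₁.dist x₁ y₁ + G₂.dist x₂ y₂).choose (G₁.dist x₁ y₁)
        * (G₁.finsetWalkLength (G₁.dist x₁ y₁) x₁ y₁).card
        * (G₂.finsetWalkLength (G₂.dist x₂ y₂) x₂ y₂).card := by
  rw [boxProd_dist' h₁ h₂, card_boxProd_finsetWalkLength']
  refine Finset.sum_eq_single_of_mem (G₁.dist x₁ y₁, G₂.dist x₂ y₂) (by simp) ?_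
  intro p hmem hne
  rw [Finset.HasAntidiagonal.mem_antidiagonal] at hmem
  rcases Nat.lt_or_ge p.1 (G₁.dist x₁ y₁) with h | h
  · rw [finsetWalkLength_eq_empty_of_lt' G₁ h]; simp
  · have h2 : p.2 < G₂.dist x₂ y₂ := by
      rcases Nat.lt_or_ge p.2 (G₂.dist x₂ y₂) with h' | h'
      · exact h'
      · exfalso; apply hne; have : p.1 = G₁.dist x₁ y₁ := by omega
        exact Prod.ext this (by omega)
    rw [finsetWalkLength_eq_empty_of_lt' G₂ h2]; simp

lemma takeUntil_start' {V : Type*} {G : SimpleGraph V} [DecidableEq V] {z y : V}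
    (q : G.Walk z y) (h : z ∈ q.support) : q.takeUntil z h = Walk.nil := by
  cases q <;> simp [Walk.takeUntil]

lemma dropUntil_start' {V : Type*} {G : SimpleGraph V} [DecidableEq V] {z y : V}
    (q : G.Walk z y) (h : z ∈ q.support) : q.dropUntil z h = q := by
  cases q <;> simp [Walk.dropUntil]

lemma takeUntil_cons_of_ne' {V : Type*} {G : SimpleGraph V} [DecidableEq V]
    {x w' w u : V} (r : G.Adj x w') (p : G.Walk w' w)
    (h : u ∈ (Walk.cons r p).support) (hne : x ≠ u) :
    (Walk.cons r p).takeUntil u h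
      = Walk.cons r (p.takeUntil u (by simpa [hne.symm] using h)) := by
  simp [Walk.takeUntil, hne]

lemma dropUntil_cons_of_ne' {V : Type*} {G : SimpleGraph V} [DecidableEq V]
    {x w' w u : V} (r : G.Adj x w') (p : G.Walk w' w)
    (h : u ∈ (Walk.cons r p).support) (hne : x ≠ u) :
    (Walk.cons r p).dropUntil u h = p.dropUntil u (by simpa [hne.symm] using h) := by
  simp [Walk.dropUntil, hne]

lemma end_not_mem_support_dropLast' {V : Type*} {G : SimpleGraph V} {x z : V} (p : G.Walk x z)
    (hp : p.length = G.dist x z) : z ∉ p.support.dropLast := by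
  induction p with
  | nil => simp
  | @cons x w' z r rest ih =>
    have hxz : x ≠ z := by
      rintro rfl
      rw [SimpleGraph.dist_self] at hp
      simp at hp
    have hrest : rest.length = G.dist w' z := by
      obtain ⟨q, hq⟩ := rest.reachable.exists_walk_length_eq_dist
      have h1 : G.dist w' z ≤ rest.length := G.dist_le rest
      have h2 : G.dist x z ≤ 1 + G.dist w' z := by
        have := G.dist_le (Walk.cons r q)
        simpa [hq, Nat.add_comm] using this
      simp only [Walk.length_cons] at hp
      omega
    rw [Walk.support_cons, List.dropLast_cons_of_ne_nil (Walk.support_ne_nil rest)]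
    simp only [List.mem_cons]
    rintro (rfl | hmem)
    · exact hxz rfl
    · exact ih hrest hmem

lemma takeUntil_dropUntil_append' {V : Type*} {G : SimpleGraph V} [DecidableEq V]
    {x z y : V} (p : G.Walk x z) (q : G.Walk z y)
    (hz : z ∉ p.support.dropLast) (h : z ∈ (p.append q).support) :
    (p.append q).takeUntil z h = p ∧ (p.append q).dropUntil z h = q := by
  induction p with
  | nil =>
    rw [Walk.nil_append] at h
    exact ⟨takeUntil_start' q h, dropUntil_start' q h⟩
  | @cons a b c r rest ih =>
    rw [Walk.support_cons, List.dropLast_cons_of_ne_nil (Walk.support_ne_nil rest),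
      List.mem_cons] at hz
    push_neg at hz
    obtain ⟨hzx, hz'⟩ := hz
    have hne : a ≠ c := fun hh => hzx hh.symm
    have h' : c ∈ (rest.append q).support := by
      have := h
      rw [Walk.cons_append] at this
      simpa [hne.symm] using this
    obtain ⟨h1, h2⟩ := ih q hz' h'
    constructor
    · have : ((Walk.cons r rest).append q).takeUntil c h
          = Walk.cons r ((rest.append q).takeUntil c h') := by
        have e : ((Walk.cons r rest).append q) = Walk.cons r (rest.append q) :=
          Walk.cons_append r rest q
        rw [show ((Walk.cons r rest).append q).takeUntil c h
            = (Walk.cons r (rest.append q)).takeUntil c (e ▸ h) from by congr 1,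
          takeUntil_cons_of_ne' r _ _ hne]
      rw [this, h1]
    · have : ((Walk.cons r rest).append q).dropUntil c h
          = (rest.append q).dropUntil c h' := by
        have e : ((Walk.cons r rest).append q) = Walk.cons r (rest.append q) :=
          Walk.cons_append r rest q
        rw [show ((Walk.cons r rest).append q).dropUntil c h
            = (Walk.cons r (rest.append q)).dropUntil c (e ▸ h) from by congr 1,
          dropUntil_cons_of_ne' r _ _ hne]
      rw [this, h2]

lemma card_geodesics_through' {V : Type*} (G : SimpleGraph V) [DecidableEq V]
    [LocallyFinite G] {x z y : V}
    [DecidablePred fun p : G.Walk x y => z ∈ p.support]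
    (h : G.dist x z + G.dist z y = G.dist x y) :
    ((G.finsetWalkLength (G.dist x y) x y).filter (fun p => z ∈ p.support)).card
      = (G.finsetWalkLength (G.dist x z) x z).card
        * (G.finsetWalkLength (G.dist z y) z y).card := by
  rw [← Finset.card_product]
  refine Finset.card_bij (fun w hw =>
      (w.takeUntil z (Finset.mem_filter.mp hw).2, w.dropUntil z (Finset.mem_filter.mp hw).2))
    ?_ ?_ ?_
  · intro w hw
    have hw1 : w.length = G.dist x y :=
      mem_finsetWalkLength_iff.mp (Finset.mem_filter.mp hw).1
    have key : ∀ (hh : z ∈ w.support), (w.takeUntil z hh).length = G.dist x z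
        ∧ (w.dropUntil z hh).length = G.dist z y := by
      intro hh
      have hsplit : (w.takeUntil z hh).length + (w.dropUntil z hh).length = G.dist x y := by
        have h' := congrArg Walk.length (w.take_spec hh)
        rwa [Walk.length_append, hw1] at h'
      have h1 : G.dist x z ≤ (w.takeUntil z hh).length := G.dist_le _
      have h2 : G.dist z y ≤ (w.dropUntil z hh).length := G.dist_le _
      omega
    exact Finset.mem_product.mpr ⟨mem_finsetWalkLength_iff.mpr (key _).1,
      mem_finsetWalkLength_iff.mpr (key _).2⟩
  · intro w hw w' hw' he
    rw [Prod.mk.injEq] at he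
    have := w.take_spec (Finset.mem_filter.mp hw).2
    rw [he.1, he.2, w'.take_spec (Finset.mem_filter.mp hw').2] at this
    exact this.symm
  · rintro ⟨p, q⟩ hpq
    rw [Finset.mem_product, mem_finsetWalkLength_iff, mem_finsetWalkLength_iff] at hpq
    have hz : z ∉ p.support.dropLast := end_not_mem_support_dropLast' p hpq.1
    have hmem : z ∈ (p.append q).support :=
      (Walk.mem_support_append_iff p q).mpr (Or.inl (Walk.end_mem_support p))
    have hlen : (p.append q).length = G.dist x y := by
      rw [Walk.length_append, hpq.1, hpq.2, h]
    refine ⟨p.append q, Finset.mem_filter.mpr ⟨mem_finsetWalkLength_iff.mpr hlen, hmem⟩, ?_⟩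
    obtain ⟨h1, h2⟩ := takeUntil_dropUntil_append' p q hz _
    rw [Prod.mk.injEq]
    exact ⟨h1, h2⟩

lemma key_fac' (m n : ℕ) :
    ((m+n).choose m : ℚ) = (m+n).factorial / (m.factorial * n.factorial) := by
  have h := Nat.choose_mul_factorial_mul_factorial (Nat.le_add_right m n)
  rw [Nat.add_sub_cancel_left] at h
  have : ((m+n).choose m * m.factorial * n.factorial : ℚ) = (m+n).factorial := by
    exact_mod_cast congrArg (Nat.cast : ℕ → ℚ) h
  field_simp
  linarith [this]

lemma choose_tensor' (a1 a2 b1 b2 : ℕ) :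
    ((a1+a2)+(b1+b2)).choose (a1+a2) * ((a1+a2).choose a1 * (b1+b2).choose b1)
    = ((a1+a2)+(b1+b2)).choose (a1+b1) * ((a1+b1).choose a1 * (a2+b2).choose a2) := by
  have e : (a1+a2)+(b1+b2) = (a1+b1)+(a2+b2) := by ring
  rw [← Nat.cast_inj (R := ℚ)]
  push_cast
  rw [key_fac' (a1+a2) (b1+b2), key_fac' a1 a2, key_fac' b1 b2,
    show ((a1+a2)+(b1+b2)).choose (a1+b1) = ((a1+b1)+(a2+b2)).choose (a1+b1) from by rw [← e],
    key_fac' (a1+b1) (a2+b2), key_fac' a1 b1, key_fac' a2 b2, e]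
  have f1 := Nat.factorial_pos a1
  have f2 := Nat.factorial_pos a2
  have f3 := Nat.factorial_pos b1
  have f4 := Nat.factorial_pos b2
  field_simp

end Auxiliary

section Wrappers

variable {V₁ V₂ : Type*} [Fintype V₁] [Fintype V₂]

lemma numGeodesicsThrough_split {V : Type*} [Fintype V] (G : SimpleGraph V) (x z y : V)
    (h : G.dist x z + G.dist z y = G.dist x y) :
    G.numGeodesicsThrough x z y = G.numGeodesics x z * G.numGeodesics z y := by
  classical
  have h1 := card_geodesics_through' G (z := z) h
  rw [SimpleGraph.numGeodesicsThrough, SimpleGraph.numGeodesics, SimpleGraph.numGeodesics]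
  convert h1 using 2

lemma numGeodesics_pos {V : Type*} [Fintype V] (G : SimpleGraph V) (hc : G.Connected)
    (x y : V) : 0 < G.numGeodesics x y := by
  classical
  have h1 := card_finsetWalkLength_dist_pos' G hc x y
  rw [SimpleGraph.numGeodesics]
  convert h1 using 1

lemma numGeodesics_boxProd {G₁ : SimpleGraph V₁} {G₂ : SimpleGraph V₂}
    (h₁ : G₁.Connected) (h₂ : G₂.Connected) (x₁ y₁ : V₁) (x₂ y₂ : V₂) :
    (G₁ □ G₂).numGeodesics (x₁, x₂) (y₁, y₂)
      = (G₁.dist x₁ y₁ + G₂.dist x₂ y₂).choose (G₁.dist x₁ y₁)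
        * G₁.numGeodesics x₁ y₁ * G₂.numGeodesics x₂ y₂ := by
  classical
  have h1 := card_boxProd_geodesics' h₁ h₂ x₁ y₁ x₂ y₂
  rw [SimpleGraph.numGeodesics, SimpleGraph.numGeodesics, SimpleGraph.numGeodesics]
  convert h1 using 2
  all_goals congr!

lemma dist_boxProd {G₁ : SimpleGraph V₁} {G₂ : SimpleGraph V₂}
    (h₁ : G₁.Connected) (h₂ : G₂.Connected) (x₁ y₁ : V₁) (x₂ y₂ : V₂) :
    (G₁ □ G₂).dist (x₁, x₂) (y₁, y₂) = G₁.dist x₁ y₁ + G₂.dist x₂ y₂ := by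
  classical
  exact boxProd_dist' h₁ h₂ x₁ y₁ x₂ y₂

end Wrappers


end SimpleGraph

/-- the binomial interpolation tensorises over the Cartesian (box)
product of two finite connected graphs. -/
theorem binomInterp_boxProd {V₁ V₂ : Type*} [Fintype V₁] [Fintype V₂]
    (G₁ : SimpleGraph V₁) (G₂ : SimpleGraph V₂)
    (h₁ : G₁.Connected) (h₂ : G₂.Connected)
    (x y z : V₁ × V₂) (t : ℝ) (ht : t ∈ Set.Icc (0 : ℝ) 1) :
    (G₁ □ G₂).binomInterp t x y z =
      G₁.binomInterp t x.1 y.1 z.1 * G₂.binomInterp t x.2 y.2 z.2 := by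
  classical
  obtain ⟨x₁, x₂⟩ := x
  obtain ⟨y₁, y₂⟩ := y
  obtain ⟨z₁, z₂⟩ := z
  dsimp only
  have hdxy := SimpleGraph.boxProd_dist' h₁ h₂ x₁ y₁ x₂ y₂
  have hdxz := SimpleGraph.boxProd_dist' h₁ h₂ x₁ z₁ x₂ z₂
  have hdzy := SimpleGraph.boxProd_dist' h₁ h₂ z₁ y₁ z₂ y₂
  have tri1 : G₁.dist x₁ y₁ ≤ G₁.dist x₁ z₁ + G₁.dist z₁ y₁ := h₁.dist_triangle
  have tri2 : G₂.dist x₂ y₂ ≤ G₂.dist x₂ z₂ + G₂.dist z₂ y₂ := h₂.dist_triangle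
  by_cases hc1 : G₁.dist x₁ z₁ + G₁.dist z₁ y₁ = G₁.dist x₁ y₁
  · by_cases hc2 : G₂.dist x₂ z₂ + G₂.dist z₂ y₂ = G₂.dist x₂ y₂
    · -- main case
      have hbox : (G₁ □ G₂).dist (x₁, x₂) (z₁, z₂) + (G₁ □ G₂).dist (z₁, z₂) (y₁, y₂)
          = (G₁ □ G₂).dist (x₁, x₂) (y₁, y₂) := by
        rw [hdxy, hdxz, hdzy]; omega
      simp only [SimpleGraph.binomInterp]
      rw [if_pos hbox, if_pos hc1, if_pos hc2]
      rw [SimpleGraph.numGeodesicsThrough_split _ _ _ _ hbox,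
        SimpleGraph.numGeodesicsThrough_split _ _ _ _ hc1,
        SimpleGraph.numGeodesicsThrough_split _ _ _ _ hc2,
        SimpleGraph.numGeodesics_boxProd h₁ h₂ x₁ y₁ x₂ y₂,
        SimpleGraph.numGeodesics_boxProd h₁ h₂ x₁ z₁ x₂ z₂,
        SimpleGraph.numGeodesics_boxProd h₁ h₂ z₁ y₁ z₂ y₂,
        hdxy, hdxz, hdzy]
      set a1 := G₁.dist x₁ z₁
      set a2 := G₂.dist x₂ z₂
      set b1 := G₁.dist z₁ y₁
      set b2 := G₂.dist z₂ y₂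
      set P1 := G₁.numGeodesics x₁ z₁
      set P2 := G₂.numGeodesics x₂ z₂
      set Q1 := G₁.numGeodesics z₁ y₁
      set Q2 := G₂.numGeodesics z₂ y₂
      have hN1 : 0 < G₁.numGeodesics x₁ y₁ := SimpleGraph.numGeodesics_pos G₁ h₁ x₁ y₁
      have hN2 : 0 < G₂.numGeodesics x₂ y₂ := SimpleGraph.numGeodesics_pos G₂ h₂ x₂ y₂
      set N1 := G₁.numGeodesics x₁ y₁
      set N2 := G₂.numGeodesics x₂ y₂
      rw [← hc1, ← hc2]
      have hch := SimpleGraph.choose_tensor' a1 a2 b1 b2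
      have hchR : ((((a1+a2)+(b1+b2)).choose (a1+a2) : ℝ))
            * (((a1+a2).choose a1 : ℝ) * ((b1+b2).choose b1 : ℝ))
          = (((a1+a2)+(b1+b2)).choose (a1+b1) : ℝ)
            * (((a1+b1).choose a1 : ℝ) * ((a2+b2).choose a2 : ℝ)) := by
        exact_mod_cast congrArg (Nat.cast : ℕ → ℝ) hch
      have hN1' : (N1 : ℝ) ≠ 0 := Nat.cast_ne_zero.mpr hN1.ne'
      have hN2' : (N2 : ℝ) ≠ 0 := Nat.cast_ne_zero.mpr hN2.ne'
      have hCh' : ((((a1+b1)+(a2+b2)).choose (a1+b1) : ℕ) : ℝ) ≠ 0 := by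
        exact_mod_cast (Nat.choose_pos (by omega)).ne'
      push_cast
      rw [show (a1+b1)+(a2+b2) = (a1+a2)+(b1+b2) from by ring] at hCh' ⊢
      rw [pow_add t a1 a2, pow_add (1-t) b1 b2]
      rw [div_mul_div_comm, div_eq_div_iff (mul_ne_zero (mul_ne_zero hCh' hN1') hN2') (mul_ne_zero hN1' hN2')]
      linear_combination (t^a1 * t^a2 * (1-t)^b1 * (1-t)^b2 * (P1:ℝ) * P2 * Q1 * Q2
        * N1 * N2) * hchR
    · -- second coordinate fails
      have hbox : ¬ ((G₁ □ G₂).dist (x₁, x₂) (z₁, z₂) + (G₁ □ G₂).dist (z₁, z₂) (y₁, y₂)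
          = (G₁ □ G₂).dist (x₁, x₂) (y₁, y₂)) := by
        rw [hdxy, hdxz, hdzy]; omega
      simp only [SimpleGraph.binomInterp]
      rw [if_neg hbox, if_neg hc2, mul_zero]
  · have hbox : ¬ ((G₁ □ G₂).dist (x₁, x₂) (z₁, z₂) + (G₁ □ G₂).dist (z₁, z₂) (y₁, y₂)
        = (G₁ □ G₂).dist (x₁, x₂) (y₁, y₂)) := by
      rw [hdxy, hdxz, hdzy]; omega
    simp only [SimpleGraph.binomInterp]
    rw [if_neg hbox, if_neg hc1, zero_mul]
end

section
/- Let ν₀, ν₁ be probability measures on a finite set V, both absolutely continuous with respect to a probability measure μ with densities f₀ and f₁. With the Hamming cost d(x,y) = 1_{x≠y}, the weak transport cost satisfies T̃₂(ν₁|ν₀) = ∑_x [1 - f₁(x)/f₀(x)]₊² f₀(x) μ(x), where [a]₊ = max(a,0). -/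
open Finset

/-- the weak transport cost with Hamming cost `d(x,y) = 1_{x≠y}`,
defined as the infimum over probability kernels `p` pushing `ν₀` to `ν₁` of
`∑_x (∑_y d(x,y) p(x,y))² ν₀(x)`, equals `∑_x [1 - f₁(x)/f₀(x)]₊² f₀(x) μ(x)`. -/
theorem weakTransport_hamming_eq {V : Type*} [Fintype V] [DecidableEq V]
    (μ ν₀ ν₁ f₀ f₁ : V → ℝ)
    (hμ_pos : ∀ x, 0 ≤ μ x) (hμ_sum : ∑ x, μ x = 1)
    (hf₀ : ∀ x, 0 ≤ f₀ x) (hf₁ : ∀ x, 0 ≤ f₁ x)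
    (hν₀ : ∀ x, ν₀ x = f₀ x * μ x) (hν₁ : ∀ x, ν₁ x = f₁ x * μ x)
    (hν₀_sum : ∑ x, ν₀ x = 1) (hν₁_sum : ∑ x, ν₁ x = 1) :
    sInf {c : ℝ | ∃ p : V → V → ℝ,
        (∀ x y, 0 ≤ p x y) ∧ (∀ x, ∑ y, p x y = 1) ∧
        (∀ y, ∑ x, ν₀ x * p x y = ν₁ y) ∧
        c = ∑ x, (∑ y, (if x = y then 0 else 1) * p x y) ^ 2 * ν₀ x} =
      ∑ x, max (1 - f₁ x / f₀ x) 0 ^ 2 * f₀ x * μ x := by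
  classical
  have hν₀_nonneg : ∀ x, 0 ≤ ν₀ x := fun x => (hν₀ x) ▸ mul_nonneg (hf₀ x) (hμ_pos x)
  have hν₁_nonneg : ∀ x, 0 ≤ ν₁ x := fun x => (hν₁ x) ▸ mul_nonneg (hf₁ x) (hμ_pos x)
  set S : ℝ := ∑ x, max (ν₀ x - ν₁ x) 0 with hS
  have hS_nonneg : 0 ≤ S := Finset.sum_nonneg fun x _ => le_max_right _ _
  -- the two total excesses coincide
  have hsum_eq : ∑ x, max (ν₁ x - ν₀ x) 0 = S := by
    have h1 : ∀ x, max (ν₁ x - ν₀ x) 0 = max (ν₀ x - ν₁ x) 0 + (ν₁ x - ν₀ x) := by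
      intro x
      rcases le_total (ν₀ x) (ν₁ x) with h | h
      · rw [max_eq_left (by linarith), max_eq_right (by linarith)]; ring
      · rw [max_eq_right (by linarith), max_eq_left (by linarith)]; ring
    simp_rw [h1]
    rw [Finset.sum_add_distrib, Finset.sum_sub_distrib, hν₀_sum, hν₁_sum]
    ring
  have hS0 : S = 0 → ∀ x, max (ν₀ x - ν₁ x) 0 = 0 := by
    intro h x
    exact (Finset.sum_eq_zero_iff_of_nonneg
      (fun x _ => le_max_right (ν₀ x - ν₁ x) 0)).mp h x (Finset.mem_univ x)
  have hS0' : S = 0 → ∀ x, max (ν₁ x - ν₀ x) 0 = 0 := by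
    intro h x
    have h2 : ∑ x, max (ν₁ x - ν₀ x) 0 = 0 := hsum_eq.trans h
    exact (Finset.sum_eq_zero_iff_of_nonneg
      (fun x _ => le_max_right (ν₁ x - ν₀ x) 0)).mp h2 x (Finset.mem_univ x)
  -- key cancellation facts
  have hq : ∀ y, S * (max (ν₁ y - ν₀ y) 0 / S) = max (ν₁ y - ν₀ y) 0 := by
    intro y
    by_cases h : S = 0
    · rw [h, hS0' h y]; simp
    · rw [mul_div_cancel₀ _ h]
  have hsumq : ∀ x, max (ν₀ x - ν₁ x) 0 * (∑ y, max (ν₁ y - ν₀ y) 0 / S)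
      = max (ν₀ x - ν₁ x) 0 := by
    intro x
    by_cases h : S = 0
    · rw [hS0 h x]; ring
    · rw [← Finset.sum_div, hsum_eq, div_self h, mul_one]
  -- the candidate optimal kernel
  set p : V → V → ℝ := fun x y =>
    if ν₀ x = 0 then (if x = y then 1 else 0)
    else (if x = y then min (ν₀ x) (ν₁ x) / ν₀ x else 0)
      + (max (ν₀ x - ν₁ x) 0 / ν₀ x) * (max (ν₁ y - ν₀ y) 0 / S) with hp
  have hp_nonneg : ∀ x y, 0 ≤ p x y := by
    intro x y
    rw [hp]
    by_cases h : ν₀ x = 0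
    · simp only [h, if_true]
      split <;> norm_num
    · simp only [h, if_false]
      have h0 : 0 ≤ ν₀ x := hν₀_nonneg x
      have h1 : 0 ≤ min (ν₀ x) (ν₁ x) := le_min h0 (hν₁_nonneg x)
      positivity
  have hp_row : ∀ x, ∑ y, p x y = 1 := by
    intro x
    by_cases h : ν₀ x = 0
    · simp [hp, h]
    · have hν₀x : 0 < ν₀ x := lt_of_le_of_ne (hν₀_nonneg x) (Ne.symm h)
      simp only [hp, h, if_false]
      rw [Finset.sum_add_distrib, Finset.sum_ite_eq, ← Finset.mul_sum]
      simp only [Finset.mem_univ, if_true]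
      have : max (ν₀ x - ν₁ x) 0 / ν₀ x * ∑ y, max (ν₁ y - ν₀ y) 0 / S
          = max (ν₀ x - ν₁ x) 0 / ν₀ x := by
        rw [div_mul_eq_mul_div, hsumq]
      rw [this, ← add_div]
      have hmm : min (ν₀ x) (ν₁ x) + max (ν₀ x - ν₁ x) 0 = ν₀ x := by
        rcases le_total (ν₀ x) (ν₁ x) with hc | hc
        · rw [min_eq_left hc, max_eq_right (by linarith)]; ring
        · rw [min_eq_right hc, max_eq_left (by linarith)]; ring
      rw [hmm, div_self h]
  have hp_push : ∀ y, ∑ x, ν₀ x * p x y = ν₁ y := by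
    intro y
    have hterm : ∀ x, ν₀ x * p x y
        = (if x = y then min (ν₀ x) (ν₁ x) else 0)
          + max (ν₀ x - ν₁ x) 0 * (max (ν₁ y - ν₀ y) 0 / S) := by
      intro x
      by_cases h : ν₀ x = 0
      · have h2' : (0:ℝ) - ν₁ x ≤ 0 := by linarith [hν₁_nonneg x]
        rw [h]
        simp [hp, h, min_eq_left (hν₁_nonneg x), max_eq_right h2', hν₁_nonneg x]
      · simp only [hp, h, if_false]
        rw [mul_add]
        congr 1
        · split
          · rw [mul_div_cancel₀ _ h]
          · ring
        · rw [← mul_assoc, mul_div_cancel₀ _ h]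
    rw [Finset.sum_congr rfl fun x _ => hterm x, Finset.sum_add_distrib,
      Finset.sum_ite_eq' Finset.univ y (fun x => min (ν₀ x) (ν₁ x)),
      ← Finset.sum_mul, ← hS, hq]
    simp only [Finset.mem_univ, if_true]
    rcases le_total (ν₀ y) (ν₁ y) with hc | hc
    · rw [min_eq_left hc, max_eq_left (by linarith)]; ring
    · rw [min_eq_right hc, max_eq_right (by linarith)]; ring
  -- inner sum rewrite
  have hinner : ∀ (q : V → V → ℝ), (∀ x, ∑ y, q x y = 1) →
      ∀ x, ∑ y, (if x = y then (0:ℝ) else 1) * q x y = 1 - q x x := by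
    intro q hrow x
    have h1 : ∀ y, (if x = y then (0:ℝ) else 1) * q x y
        = q x y - (if x = y then q x y else 0) := by
      intro y; by_cases h : x = y <;> simp [h]
    rw [Finset.sum_congr rfl fun y _ => h1 y, Finset.sum_sub_distrib, hrow,
      Finset.sum_ite_eq]
    simp
  -- the common per-site value
  have hterm_eq : ∀ x, max (1 - f₁ x / f₀ x) 0 ^ 2 * f₀ x * μ x
      = (max (ν₀ x - ν₁ x) 0 / ν₀ x) ^ 2 * ν₀ x := by
    intro x
    by_cases h : ν₀ x = 0
    · have : f₀ x * μ x = 0 := by rw [← hν₀ x, h]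
      rw [h, mul_assoc, this]; ring
    · have hν₀x : 0 < ν₀ x := lt_of_le_of_ne (hν₀_nonneg x) (Ne.symm h)
      have hμx : μ x ≠ 0 := by
        intro hc; apply h; rw [hν₀ x, hc, mul_zero]
      have hf₀x : f₀ x ≠ 0 := by
        intro hc; apply h; rw [hν₀ x, hc, zero_mul]
      have hdiv : f₁ x / f₀ x = ν₁ x / ν₀ x := by
        rw [hν₀ x, hν₁ x, mul_div_mul_right _ _ hμx]
      have hmax : max (1 - f₁ x / f₀ x) 0 = max (ν₀ x - ν₁ x) 0 / ν₀ x := by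
        rw [hdiv, ← max_div_div_right hν₀x.le, zero_div, sub_div, div_self h]
      rw [hmax, hν₀ x]
      ring
  set T : ℝ := ∑ x, max (1 - f₁ x / f₀ x) 0 ^ 2 * f₀ x * μ x with hT
  -- diagonal of the candidate kernel
  have hp_diag : ∀ x, (1 - p x x) ^ 2 * ν₀ x
      = (max (ν₀ x - ν₁ x) 0 / ν₀ x) ^ 2 * ν₀ x := by
    intro x
    by_cases h : ν₀ x = 0
    · rw [h]; ring
    · have hν₀x : 0 < ν₀ x := lt_of_le_of_ne (hν₀_nonneg x) (Ne.symm h)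
      have hzero : max (ν₀ x - ν₁ x) 0 / ν₀ x * (max (ν₁ x - ν₀ x) 0 / S) = 0 := by
        rcases le_total (ν₀ x) (ν₁ x) with hc | hc
        · rw [max_eq_right (by linarith : ν₀ x - ν₁ x ≤ 0)]; simp
        · rw [max_eq_right (by linarith : ν₁ x - ν₀ x ≤ 0)]; simp
      have hpxx : p x x = min (ν₀ x) (ν₁ x) / ν₀ x := by
        simp only [hp, h, if_false, if_true]
        rw [hzero, add_zero]
      rw [hpxx]
      have : 1 - min (ν₀ x) (ν₁ x) / ν₀ x = max (ν₀ x - ν₁ x) 0 / ν₀ x := by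
        rw [eq_div_iff h, sub_mul, one_mul, div_mul_cancel₀ _ h]
        rcases le_total (ν₀ x) (ν₁ x) with hc | hc
        · rw [min_eq_left hc, max_eq_right (by linarith)]; ring
        · rw [min_eq_right hc, max_eq_left (by linarith)]
      rw [this]
  -- T is attained by our kernel p
  have hmem : T ∈ {c : ℝ | ∃ p : V → V → ℝ,
      (∀ x y, 0 ≤ p x y) ∧ (∀ x, ∑ y, p x y = 1) ∧
      (∀ y, ∑ x, ν₀ x * p x y = ν₁ y) ∧
      c = ∑ x, (∑ y, (if x = y then 0 else 1) * p x y) ^ 2 * ν₀ x} := by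
    refine ⟨p, hp_nonneg, hp_row, hp_push, ?_⟩
    rw [hT]
    refine Finset.sum_congr rfl fun x _ => ?_
    rw [hinner p hp_row x, hp_diag x, hterm_eq x]
  -- T is a lower bound
  have hlb : ∀ c ∈ {c : ℝ | ∃ p : V → V → ℝ,
      (∀ x y, 0 ≤ p x y) ∧ (∀ x, ∑ y, p x y = 1) ∧
      (∀ y, ∑ x, ν₀ x * p x y = ν₁ y) ∧
      c = ∑ x, (∑ y, (if x = y then 0 else 1) * p x y) ^ 2 * ν₀ x}, T ≤ c := by
    rintro c ⟨q, hq_nonneg, hq_row, hq_push, rfl⟩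
    rw [hT]
    refine Finset.sum_le_sum fun x _ => ?_
    rw [hinner q hq_row x, hterm_eq x]
    by_cases h : ν₀ x = 0
    · rw [h]; simp
    · have hν₀x : 0 < ν₀ x := lt_of_le_of_ne (hν₀_nonneg x) (Ne.symm h)
      have hqle1 : q x x ≤ 1 := by
        rw [← hq_row x]
        exact Finset.single_le_sum (fun y _ => hq_nonneg x y) (Finset.mem_univ x)
      have hqle : ν₀ x * q x x ≤ ν₁ x := by
        rw [← hq_push x]
        exact Finset.single_le_sum
          (fun y _ => mul_nonneg (hν₀_nonneg y) (hq_nonneg y x)) (Finset.mem_univ x)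
      have hle : max (ν₀ x - ν₁ x) 0 / ν₀ x ≤ 1 - q x x := by
        rw [div_le_iff₀ hν₀x, max_le_iff]
        constructor
        · nlinarith
        · nlinarith
      have hnn : 0 ≤ max (ν₀ x - ν₁ x) 0 / ν₀ x :=
        div_nonneg (le_max_right _ _) (hν₀_nonneg x)
      exact mul_le_mul_of_nonneg_right (pow_le_pow_left₀ hnn hle 2) (hν₀_nonneg x)
  refine le_antisymm (csInf_le ⟨T, hlb⟩ hmem) (le_csInf ⟨T, hmem⟩ hlb)
end

section
/- Let μ, ν₀, ν₁ be probability measures on a finite set V, with ν₀, ν₁ absolutely continuous with respect to μ, and let ν_t = (1-t)ν₀ + tν₁. Then for all t ∈ [0,1]: H(ν_t|μ) ≤ (1-t)H(ν₀|μ) + tH(ν₁|μ) − (t(1-t)/2)(T̃₂(ν₁|ν₀) + T̃₂(ν₀|ν₁)). -/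
open Finset

/-- Relative entropy `H(ν|μ) = ∑_x ν(x) log(ν(x)/μ(x))` on a finite set. -/
noncomputable def relEnt {V : Type*} [Fintype V] (ν μ : V → ℝ) : ℝ :=
  ∑ x, ν x * Real.log (ν x / μ x)

/-- The weak transport cost `T̃₂(ν₁|ν₀) = ∑_x [1 - ν₁(x)/ν₀(x)]₊² ν₀(x)`
(Hamming cost; this is the density formula, independent of the dominating measure). -/
noncomputable def weakT {V : Type*} [Fintype V] (ν₁ ν₀ : V → ℝ) : ℝ :=
  ∑ x, max (1 - ν₁ x / ν₀ x) 0 ^ 2 * ν₀ x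

section Aux
open Real Set

lemma hasDerivA (y : ℝ) (hy : y ≠ 0) :
    HasDerivAt (fun y : ℝ => y * Real.log y - y + 1 - (y-1)^2/2) (Real.log y - y + 1) y := by
  have h1 := Real.hasDerivAt_mul_log hy
  have h2 : HasDerivAt (fun y : ℝ => (y-1)^2/2) (y - 1) y := by
    have := (((hasDerivAt_id y).sub_const 1).pow 2).div_const 2
    refine this.congr_deriv ?_; (try simp only [id_eq]); ring
  have := ((h1.sub (hasDerivAt_id y)).add_const 1).sub h2
  refine this.congr_deriv ?_; (try simp only [id_eq]); ring

lemma lemA (x : ℝ) (hx : 0 < x) (hx1 : x ≤ 1) :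
    (x-1)^2/2 ≤ x * Real.log x - x + 1 := by
  set f : ℝ → ℝ := fun y => y * Real.log y - y + 1 - (y-1)^2/2 with hf
  have hmono : AntitoneOn f (Icc x 1) := by
    apply antitoneOn_of_deriv_nonpos (convex_Icc x 1)
    · apply ContinuousOn.sub
      apply ContinuousOn.add
      apply ContinuousOn.sub
      · exact Real.continuous_mul_log.continuousOn
      · exact continuousOn_id
      · exact continuousOn_const
      · exact (continuous_pow 2).comp (continuous_id.sub continuous_const) |>.continuousOn.div_const 2
    · intro y hy
      rw [interior_Icc] at hy
      exact (hasDerivA y (by linarith [hy.1])).differentiableAt.differentiableWithinAt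
    · intro y hy
      rw [interior_Icc] at hy
      have h0 : (0:ℝ) < y := lt_trans hx hy.1
      rw [(hasDerivA y h0.ne').deriv]
      have := Real.log_le_sub_one_of_pos h0
      linarith
  have h01 : f 1 ≤ f x := hmono (left_mem_Icc.2 hx1) (right_mem_Icc.2 hx1) hx1
  have hf1 : f 1 = 0 := by simp [hf]
  rw [hf1] at h01
  simp only [hf] at h01
  linarith

lemma hasDerivB (y : ℝ) (hy : 0 < y) :
    HasDerivAt (fun y : ℝ => y * Real.log y - y + 1 - (y/2 - 1 + (2*y)⁻¹))
      (Real.log y - 1/2 + 1/(2*y^2)) y := by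
  have h1 := Real.hasDerivAt_mul_log hy.ne'
  have h2 : HasDerivAt (fun y : ℝ => y/2 - 1 + (2*y)⁻¹) (1/2 - 2/(2*y)^2) y := by
    have hinv : HasDerivAt (fun y : ℝ => (2*y)⁻¹) (-2/(2*y)^2) y := by
      have := ((hasDerivAt_id y).const_mul 2).inv (by positivity)
      refine this.congr_deriv ?_; (try simp only [id_eq]); ring
    have := (((hasDerivAt_id y).div_const 2).sub_const 1).add hinv
    refine this.congr_deriv ?_; ring
  have := ((h1.sub (hasDerivAt_id y)).add_const 1).sub h2
  refine this.congr_deriv ?_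
  field_simp
  ring

lemma lemB (x : ℝ) (hx1 : 1 ≤ x) :
    (x-1)^2/(2*x) ≤ x * Real.log x - x + 1 := by
  have hx : (0:ℝ) < x := lt_of_lt_of_le one_pos hx1
  set f : ℝ → ℝ := fun y => y * Real.log y - y + 1 - (y/2 - 1 + (2*y)⁻¹) with hf
  have hmono : MonotoneOn f (Icc 1 x) := by
    apply monotoneOn_of_deriv_nonneg (convex_Icc 1 x)
    · apply ContinuousOn.sub
      · exact ((Real.continuous_mul_log.continuousOn.sub continuousOn_id).add continuousOn_const)
      · apply ContinuousOn.add
        · exact (continuousOn_id.div_const 2).sub continuousOn_const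
        · apply ContinuousOn.inv₀ (continuousOn_const.mul continuousOn_id)
          intro y hy
          have : (0:ℝ) < y := lt_of_lt_of_le one_pos hy.1
          show (2:ℝ) * y ≠ 0
          positivity
    · intro y hy
      rw [interior_Icc] at hy
      exact (hasDerivB y (by linarith [hy.1])).differentiableAt.differentiableWithinAt
    · intro y hy
      rw [interior_Icc] at hy
      have h0 : (0:ℝ) < y := by linarith [hy.1]
      rw [(hasDerivB y h0).deriv]
      have hlog : 1 - y⁻¹ ≤ Real.log y := by
        have := Real.log_le_sub_one_of_pos (show (0:ℝ) < y⁻¹ by positivity)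
        rw [Real.log_inv] at this
        linarith
      have e : 1/(2*y^2) = y⁻¹^2/2 := by field_simp
      nlinarith [sq_nonneg (1 - y⁻¹), e, hlog]
  have h01 : f 1 ≤ f x := hmono (left_mem_Icc.2 hx1) (right_mem_Icc.2 hx1) hx1
  have hf1 : f 1 = 0 := by norm_num [hf]
  rw [hf1] at h01
  simp only [hf] at h01
  have heq : x/2 - 1 + (2*x)⁻¹ = (x-1)^2/(2*x) := by field_simp; ring
  linarith

lemma breg (u v : ℝ) (hu : 0 < u) (hv : 0 < v) :
    (u - v)^2 / (2 * max u v) ≤ u * Real.log (u/v) - u + v := by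
  rcases le_total u v with h | h
  · rw [max_eq_right h]
    have hx : 0 < u/v := by positivity
    have hle := lemA (u/v) hx (by rw [div_le_one hv]; exact h)
    have := mul_le_mul_of_nonneg_left hle hv.le
    have e1 : v * ((u/v - 1)^2/2) = (u-v)^2/(2*v) := by field_simp
    have e2 : v * (u/v * Real.log (u/v) - u/v + 1) = u * Real.log (u/v) - u + v := by
      field_simp
    linarith [e1 ▸ e2 ▸ this]
  · rw [max_eq_left h]
    have hx : 1 ≤ u/v := by rw [le_div_iff₀ hv]; linarith
    have hle := lemB (u/v) hx
    have := mul_le_mul_of_nonneg_left hle hv.le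
    have e1 : v * ((u/v - 1)^2/(2*(u/v))) = (u-v)^2/(2*u) := by field_simp
    have e2 : v * (u/v * Real.log (u/v) - u/v + 1) = u * Real.log (u/v) - u + v := by
      field_simp
    linarith [e1 ▸ e2 ▸ this]

lemma key_pos (a b t : ℝ) (hb : 0 < b) (hba : b ≤ a) (ht0 : 0 ≤ t) (ht1 : t ≤ 1) :
    ((1-t)*a + t*b) * Real.log ((1-t)*a + t*b) ≤
      (1-t)*(a*Real.log a) + t*(b*Real.log b) - t*(1-t)/2 * ((a-b)^2/a) := by
  have ha : 0 < a := lt_of_lt_of_le hb hba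
  set c := (1-t)*a + t*b with hc
  have hcb : b ≤ c := by nlinarith
  have hca : c ≤ a := by nlinarith
  have hcpos : 0 < c := lt_of_lt_of_le hb hcb
  have h1 := breg a c ha hcpos
  have h2 := breg b c hb hcpos
  rw [max_eq_left hca] at h1
  rw [max_eq_right hcb] at h2
  rw [Real.log_div ha.ne' hcpos.ne'] at h1
  rw [Real.log_div hb.ne' hcpos.ne'] at h2
  have hE : (1-t)*(a*(Real.log a - Real.log c) - a + c) + t*(b*(Real.log b - Real.log c) - b + c)
      = (1-t)*(a*Real.log a) + t*(b*Real.log b) - c*Real.log c := by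
    rw [hc]; ring
  have hG : t * ((b-c)^2/(2*a)) ≤ t * ((b-c)^2/(2*c)) := by
    apply mul_le_mul_of_nonneg_left _ ht0
    gcongr
  have hF : (1-t)*((a-c)^2/(2*a)) + t*((b-c)^2/(2*a)) = t*(1-t)/2*((a-b)^2/a) := by
    rw [hc]; field_simp; ring
  have hm1 := mul_le_mul_of_nonneg_left h1 (by linarith : (0:ℝ) ≤ 1 - t)
  have hm2 := mul_le_mul_of_nonneg_left h2 ht0
  linarith

lemma key_core (a b t : ℝ) (ha : 0 ≤ a) (hb : 0 ≤ b) (ht0 : 0 ≤ t) (ht1 : t ≤ 1) :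
    ((1-t)*a + t*b) * Real.log ((1-t)*a + t*b) ≤
      (1-t)*(a*Real.log a) + t*(b*Real.log b)
        - t*(1-t)/2 * (max (1 - b/a) 0^2 * a + max (1 - a/b) 0^2 * b) := by
  rcases ha.eq_or_lt with ha0 | hapos
  · rcases hb.eq_or_lt with hb0 | hbpos
    · simp [← ha0, ← hb0]
    · -- a = 0, b > 0
      rcases ht0.eq_or_lt with ht0' | htpos
      · simp [← ha0, ← ht0']
      · have hD : max (1 - b/a) 0^2 * a + max (1 - a/b) 0^2 * b = b := by
          rw [← ha0]; simp [hbpos.ne']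
        rw [hD, ← ha0]
        have hlog : Real.log ((1-t)*0 + t*b) = Real.log t + Real.log b := by
          rw [show (1-t)*0 + t*b = t*b by ring, Real.log_mul htpos.ne' hbpos.ne']
        rw [hlog]
        have hlt : Real.log t ≤ -(1-t)/2 := by
          have := Real.log_le_sub_one_of_pos htpos
          linarith
        have := mul_le_mul_of_nonneg_left hlt (by positivity : (0:ℝ) ≤ t*b)
        nlinarith
  · rcases hb.eq_or_lt with hb0 | hbpos
    · -- a > 0, b = 0
      rcases (by linarith : (0:ℝ) ≤ 1 - t).eq_or_lt with ht1' | htpos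
      · have ht' : t = 1 := by linarith
        subst ht'
        simp [← hb0]
      · have hD : max (1 - b/a) 0^2 * a + max (1 - a/b) 0^2 * b = a := by
          rw [← hb0]; simp [hapos.ne']
        rw [hD, ← hb0]
        have hlog : Real.log ((1-t)*a + t*0) = Real.log (1-t) + Real.log a := by
          rw [show (1-t)*a + t*0 = (1-t)*a by ring, Real.log_mul htpos.ne' hapos.ne']
        rw [hlog]
        have hlt : Real.log (1-t) ≤ -t/2 := by
          have := Real.log_le_sub_one_of_pos htpos
          linarith
        have := mul_le_mul_of_nonneg_left hlt (by positivity : (0:ℝ) ≤ (1-t)*a)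
        nlinarith
    · -- a > 0, b > 0
      rcases le_total b a with hba | hab
      · have hmax1 : max (1 - b/a) 0 = 1 - b/a := by
          apply max_eq_left
          have : b/a ≤ 1 := by rw [div_le_one hapos]; exact hba
          linarith
        have hmax2 : max (1 - a/b) 0 = 0 := by
          apply max_eq_right
          have : (1:ℝ) ≤ a/b := by rw [le_div_iff₀ hbpos]; linarith
          linarith
        have heq : (1 - b/a)^2 * a + 0^2 * b = (a-b)^2/a := by
          field_simp; ring
        rw [hmax1, hmax2, heq]
        exact key_pos a b t hbpos hba ht0 ht1
      · have hmax1 : max (1 - b/a) 0 = 0 := by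
          apply max_eq_right
          have : (1:ℝ) ≤ b/a := by rw [le_div_iff₀ hapos]; linarith
          linarith
        have hmax2 : max (1 - a/b) 0 = 1 - a/b := by
          apply max_eq_left
          have : a/b ≤ 1 := by rw [div_le_one hbpos]; exact hab
          linarith
        have heq : 0^2 * a + (1 - a/b)^2 * b = (b-a)^2/b := by
          field_simp; ring
        rw [hmax1, hmax2, heq]
        have h := key_pos b a (1-t) hapos hab (by linarith) (by linarith)
        rw [show (1-(1-t))*b + (1-t)*a = (1-t)*a + t*b by ring] at h
        linarith [h]

lemma key (m a b t : ℝ) (ha : 0 ≤ a) (hb : 0 ≤ b)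
    (h0 : m = 0 → a = 0) (h1 : m = 0 → b = 0) (ht0 : 0 ≤ t) (ht1 : t ≤ 1) :
    ((1-t)*a + t*b) * Real.log (((1-t)*a + t*b)/m) ≤
      (1-t)*(a*Real.log (a/m)) + t*(b*Real.log (b/m))
        - t*(1-t)/2 * (max (1 - b/a) 0^2 * a + max (1 - a/b) 0^2 * b) := by
  rcases eq_or_ne m 0 with hm | hm
  · simp [h0 hm, h1 hm]
  · have e : ∀ u : ℝ, 0 ≤ u → u * Real.log (u/m) = u * Real.log u - u * Real.log m := by
      intro u hu
      rcases hu.eq_or_lt with h | h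
      · simp [← h]
      · rw [Real.log_div h.ne' hm]; ring
    rw [e _ (add_nonneg (mul_nonneg (by linarith) ha) (mul_nonneg ht0 hb)), e a ha, e b hb]
    have hcm : ((1-t)*a + t*b) * Real.log m
        = (1-t)*(a*Real.log m) + t*(b*Real.log m) := by ring
    have ea : (1-t)*(a*Real.log a - a*Real.log m)
        = (1-t)*(a*Real.log a) - (1-t)*(a*Real.log m) := by ring
    have eb : t*(b*Real.log b - b*Real.log m)
        = t*(b*Real.log b) - t*(b*Real.log m) := by ring
    have := key_core a b t ha hb ht0 ht1
    linarith [this, hcm, ea, eb]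

end Aux

/-- displacement convexity of the entropy on the complete graph along the
linear interpolation `ν_t = (1-t)ν₀ + tν₁`. -/
theorem displacementConvexity_completeGraph {V : Type*} [Fintype V]
    (μ ν₀ ν₁ : V → ℝ)
    (hμ_pos : ∀ x, 0 ≤ μ x) (hμ_sum : ∑ x, μ x = 1)
    (hν₀_pos : ∀ x, 0 ≤ ν₀ x) (hν₀_sum : ∑ x, ν₀ x = 1)
    (hν₁_pos : ∀ x, 0 ≤ ν₁ x) (hν₁_sum : ∑ x, ν₁ x = 1)
    (hac₀ : ∀ x, μ x = 0 → ν₀ x = 0) (hac₁ : ∀ x, μ x = 0 → ν₁ x = 0)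
    (t : ℝ) (ht : t ∈ Set.Icc (0 : ℝ) 1) :
    relEnt (fun x => (1 - t) * ν₀ x + t * ν₁ x) μ ≤
      (1 - t) * relEnt ν₀ μ + t * relEnt ν₁ μ -
        t * (1 - t) / 2 * (weakT ν₁ ν₀ + weakT ν₀ ν₁) := by
  obtain ⟨ht0, ht1⟩ := ht
  calc relEnt (fun x => (1 - t) * ν₀ x + t * ν₁ x) μ
      = ∑ x, ((1-t)*ν₀ x + t*ν₁ x) * Real.log (((1-t)*ν₀ x + t*ν₁ x)/μ x) := rfl
    _ ≤ ∑ x, ((1-t)*(ν₀ x*Real.log (ν₀ x/μ x)) + t*(ν₁ x*Real.log (ν₁ x/μ x))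
          - t*(1-t)/2 * (max (1 - ν₁ x/ν₀ x) 0^2 * ν₀ x + max (1 - ν₀ x/ν₁ x) 0^2 * ν₁ x)) :=
        Finset.sum_le_sum fun x _ =>
          key (μ x) (ν₀ x) (ν₁ x) t (hν₀_pos x) (hν₁_pos x) (hac₀ x) (hac₁ x) ht0 ht1
    _ = (1 - t) * relEnt ν₀ μ + t * relEnt ν₁ μ -
          t * (1 - t) / 2 * (weakT ν₁ ν₀ + weakT ν₀ ν₁) := by
        rw [relEnt, relEnt, weakT, weakT, Finset.sum_sub_distrib, Finset.sum_add_distrib,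
          ← Finset.mul_sum, ← Finset.mul_sum, ← Finset.mul_sum, Finset.sum_add_distrib]
end

section
/- Let f₀, f₁ be probability densities with respect to a probability measure μ on a finite set V, and let f_t = (1-t)f₀ + tf₁. Then the function F(t) = ∑_x f_t(x) log f_t(x) μ(x) satisfies F''(t) ≥ T̃₂(ν₁|ν₀) + T̃₂(ν₀|ν₁) for all t ∈ (0,1), where νᵢ = fᵢμ and T̃₂(ν₁|ν₀) = ∑_x [1-f₁(x)/f₀(x)]₊² f₀(x)μ(x). -/
open Finset

lemma key_pointwise {a b c u t : ℝ} (ha : 0 < a) (hb : 0 < b) (hc : 0 ≤ c)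
    (ht0 : 0 < t) (ht1 : t < 1) (hu : u = (1 - t) * a + t * b) :
    max (1 - b / a) 0 ^ 2 * a * c + max (1 - a / b) 0 ^ 2 * b * c
      ≤ (b - a) ^ 2 / u * c := by
  have hupos : 0 < u := by
    have h1 : 0 < 1 - t := by linarith
    rw [hu]; positivity
  rcases le_total b a with h | h
  · have h1 : max (1 - a / b) 0 = 0 :=
      max_eq_right (by rw [sub_nonpos]; exact (one_le_div hb).2 h)
    have h2 : max (1 - b / a) 0 = 1 - b / a :=
      max_eq_left (sub_nonneg.2 (div_le_one_of_le₀ h ha.le))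
    rw [h1, h2]
    have h3 : (1 - b / a) ^ 2 * a = (b - a) ^ 2 / a := by
      field_simp; ring
    have hua : u ≤ a := by nlinarith
    have h4 : (b - a) ^ 2 / a ≤ (b - a) ^ 2 / u := by gcongr
    nlinarith [mul_le_mul_of_nonneg_right h4 hc]
  · have h1 : max (1 - b / a) 0 = 0 :=
      max_eq_right (by rw [sub_nonpos]; exact (one_le_div ha).2 h)
    have h2 : max (1 - a / b) 0 = 1 - a / b :=
      max_eq_left (sub_nonneg.2 (div_le_one_of_le₀ h hb.le))
    rw [h1, h2]
    have h3 : (1 - a / b) ^ 2 * b = (b - a) ^ 2 / b := by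
      field_simp
    have hub : u ≤ b := by nlinarith
    have h4 : (b - a) ^ 2 / b ≤ (b - a) ^ 2 / u := by gcongr
    nlinarith [mul_le_mul_of_nonneg_right h4 hc]

/-- the second derivative of
`F(t) = ∑_x f_t(x) log f_t(x) μ(x)` with `f_t = (1-t)f₀ + tf₁` is bounded below by
`T̃₂(ν₁|ν₀) + T̃₂(ν₀|ν₁)` for `t ∈ (0,1)`, where
`T̃₂(ν₁|ν₀) = ∑_x [1 - f₁(x)/f₀(x)]₊² f₀(x) μ(x)`. -/
theorem second_deriv_entropy_ge_weakTransport {V : Type*} [Fintype V]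
    (μ f₀ f₁ : V → ℝ)
    (hμ_pos : ∀ x, 0 ≤ μ x) (hμ_sum : ∑ x, μ x = 1)
    (hf₀_pos : ∀ x, 0 < f₀ x) (hf₁_pos : ∀ x, 0 < f₁ x)
    (hf₀_sum : ∑ x, f₀ x * μ x = 1) (hf₁_sum : ∑ x, f₁ x * μ x = 1)
    (t : ℝ) (ht : t ∈ Set.Ioo (0 : ℝ) 1) :
    deriv (deriv (fun s : ℝ => ∑ x, ((1 - s) * f₀ x + s * f₁ x) *
        Real.log ((1 - s) * f₀ x + s * f₁ x) * μ x)) t ≥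
      (∑ x, max (1 - f₁ x / f₀ x) 0 ^ 2 * f₀ x * μ x) +
      (∑ x, max (1 - f₀ x / f₁ x) 0 ^ 2 * f₁ x * μ x) := by
  obtain ⟨ht0, ht1⟩ := ht
  set F : ℝ → ℝ := fun s : ℝ => ∑ x, ((1 - s) * f₀ x + s * f₁ x) *
        Real.log ((1 - s) * f₀ x + s * f₁ x) * μ x with hF
  set F' : ℝ → ℝ := fun s : ℝ => ∑ x, (f₁ x - f₀ x) *
        (Real.log ((1 - s) * f₀ x + s * f₁ x) + 1) * μ x with hF'
  have hupos : ∀ s ∈ Set.Ioo (0:ℝ) 1, ∀ x, 0 < (1 - s) * f₀ x + s * f₁ x := by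
    intro s hs x
    have := hf₀_pos x; have := hf₁_pos x
    nlinarith [hs.1, hs.2]
  have huD : ∀ (s : ℝ) (x : V),
      HasDerivAt (fun s : ℝ => (1 - s) * f₀ x + s * f₁ x) (f₁ x - f₀ x) s := by
    intro s x
    have h1 : HasDerivAt (fun s : ℝ => (1 - s) * f₀ x + s * f₁ x)
        ((0 - 1) * f₀ x + 1 * f₁ x) s :=
      (((hasDerivAt_const s (1:ℝ)).sub (hasDerivAt_id s)).mul_const _).add
        ((hasDerivAt_id s).mul_const _)
    convert h1 using 1; ring
  have hFd : ∀ s ∈ Set.Ioo (0:ℝ) 1, HasDerivAt F (F' s) s := by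
    intro s hs
    apply HasDerivAt.fun_sum
    intro x _
    have hu := huD s x
    have hne : (1 - s) * f₀ x + s * f₁ x ≠ 0 := (hupos s hs x).ne'
    have h := (hu.mul (hu.log hne)).mul_const (μ x)
    convert h using 1
    · rfl
    · rfl
    field_simp
    rw [div_self (ne_of_gt (by linarith [hupos s hs x]))]; ring
  have heq : deriv (deriv F) t = deriv F' t := by
    apply Filter.EventuallyEq.deriv_eq
    filter_upwards [Ioo_mem_nhds ht0 ht1] with s hs
    exact (hFd s hs).deriv
  have hF'd : HasDerivAt F'
      (∑ x, (f₁ x - f₀ x) ^ 2 / ((1 - t) * f₀ x + t * f₁ x) * μ x) t := by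
    apply HasDerivAt.fun_sum
    intro x _
    have hu := huD t x
    have hne : (1 - t) * f₀ x + t * f₁ x ≠ 0 := (hupos t ⟨ht0, ht1⟩ x).ne'
    have h := (((hu.log hne).add_const 1).const_mul (f₁ x - f₀ x)).mul_const (μ x)
    convert h using 1
    · rfl
    field_simp
  rw [ge_iff_le, heq, hF'd.deriv, ← Finset.sum_add_distrib]
  apply Finset.sum_le_sum
  intro x _
  exact key_pointwise (hf₀_pos x) (hf₁_pos x) (hμ_pos x) ht0 ht1 rfl
end

section
/- Let μ, ν₀, ν₁ be probability measures on a finite set V with ν₀, ν₁ ≪ μ, and let ν_t = (1-t)ν₀ + tν₁. Then for all t ∈ [0,1]: H(ν_t|μ) ≤ (1-t)H(ν₀|μ) + tH(ν₁|μ) − (t(1-t)/2)‖ν₀ − ν₁‖²_TV. -/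
open Finset

/-- reinforced convexity of the entropy along the linear interpolation,
with deficit `(t(1-t)/2) ‖ν₀ − ν₁‖²_TV` where `‖ν₀−ν₁‖_TV = ∑_x |ν₀(x)−ν₁(x)|`. -/
theorem displacementConvexity_TV {V : Type*} [Fintype V]
    (μ ν₀ ν₁ : V → ℝ)
    (hμ_pos : ∀ x, 0 ≤ μ x) (hμ_sum : ∑ x, μ x = 1)
    (hν₀_pos : ∀ x, 0 ≤ ν₀ x) (hν₀_sum : ∑ x, ν₀ x = 1)
    (hν₁_pos : ∀ x, 0 ≤ ν₁ x) (hν₁_sum : ∑ x, ν₁ x = 1)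
    (hac₀ : ∀ x, μ x = 0 → ν₀ x = 0) (hac₁ : ∀ x, μ x = 0 → ν₁ x = 0)
    (t : ℝ) (ht : t ∈ Set.Icc (0 : ℝ) 1) :
    relEnt (fun x => (1 - t) * ν₀ x + t * ν₁ x) μ ≤
      (1 - t) * relEnt ν₀ μ + t * relEnt ν₁ μ -
        t * (1 - t) / 2 * (∑ x, |ν₀ x - ν₁ x|) ^ 2 := by
  obtain ⟨ht0, ht1⟩ := ht
  classical
  set δ : V → ℝ := fun x => ν₁ x - ν₀ x with hδdef
  set c : ℝ := (∑ x, |ν₀ x - ν₁ x|) ^ 2 with hcdef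
  set L : V → ℝ → ℝ := fun x s => (1 - s) * ν₀ x + s * ν₁ x with hLdef
  -- basic facts
  have hboth : ∀ x, ¬(ν₀ x = 0 ∧ ν₁ x = 0) → 0 < μ x := by
    intro x hx
    rcases (hμ_pos x).eq_or_lt with h | h
    · exact absurd ⟨hac₀ x h.symm, hac₁ x h.symm⟩ hx
    · exact h
  have hLd : ∀ x s, HasDerivAt (fun s' => L x s') (δ x) s := by
    intro x s
    have h : HasDerivAt (fun s' : ℝ => ν₀ x + s' * δ x) (1 * δ x) s :=
      ((hasDerivAt_id s).mul_const (δ x)).const_add (ν₀ x)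
    have he : (fun s' => L x s') = fun s' : ℝ => ν₀ x + s' * δ x := by
      funext s'; simp only [hLdef, hδdef]; ring
    rw [he]; simpa using h
  have hLnn : ∀ x s, 0 ≤ s → s ≤ 1 → 0 ≤ L x s := by
    intro x s hs0 hs1
    exact add_nonneg (mul_nonneg (by linarith) (hν₀_pos x)) (mul_nonneg hs0 (hν₁_pos x))
  have hLpos : ∀ x, ¬(ν₀ x = 0 ∧ ν₁ x = 0) → ∀ s, 0 < s → s < 1 → 0 < L x s := by
    intro x hx s hs0 hs1
    rcases (hν₀_pos x).eq_or_lt with h0 | h0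
    · rcases (hν₁_pos x).eq_or_lt with h1 | h1
      · exact absurd ⟨h0.symm, h1.symm⟩ hx
      · have : 0 < s * ν₁ x := mul_pos hs0 h1
        simp only [hLdef]; nlinarith [hν₀_pos x]
    · have : 0 < (1 - s) * ν₀ x := mul_pos (by linarith) h0
      simp only [hLdef]; nlinarith [hν₁_pos x]
  have hLzero : ∀ x s, 0 < s → s < 1 → L x s = 0 → δ x = 0 := by
    intro x s hs0 hs1 h
    by_cases hx : ν₀ x = 0 ∧ ν₁ x = 0
    · simp [hδdef, hx.1, hx.2]
    · exact absurd h (hLpos x hx s hs0 hs1).ne'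
  -- first derivative of each term
  have hterm1 : ∀ x s, 0 < s → s < 1 →
      HasDerivAt (fun s' => L x s' * Real.log (L x s' / μ x))
        (δ x * (Real.log (L x s) - Real.log (μ x) + 1)) s := by
    intro x s hs0 hs1
    by_cases hx : ν₀ x = 0 ∧ ν₁ x = 0
    · have hL0 : ∀ s', L x s' = 0 := fun s' => by simp [hLdef, hx.1, hx.2]
      have hδ0 : δ x = 0 := by simp [hδdef, hx.1, hx.2]
      have he : (fun s' => L x s' * Real.log (L x s' / μ x)) = fun _ => (0 : ℝ) := by
        funext s'; rw [hL0]; ring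
      rw [he, hδ0, zero_mul]
      exact hasDerivAt_const s 0
    · have hμx := hboth x hx
      have hLp := hLpos x hx s hs0 hs1
      have hlog : HasDerivAt (fun s' => Real.log (L x s')) ((L x s)⁻¹ * δ x) s :=
        (Real.hasDerivAt_log hLp.ne').comp s (hLd x s)
      have h1 : HasDerivAt (fun s' => L x s' * (Real.log (L x s') - Real.log (μ x)))
          (δ x * (Real.log (L x s) - Real.log (μ x)) + L x s * ((L x s)⁻¹ * δ x)) s :=
        (hLd x s).mul (hlog.sub_const _)
      have hev : (fun s' => L x s' * Real.log (L x s' / μ x)) =ᶠ[nhds s]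
          (fun s' => L x s' * (Real.log (L x s') - Real.log (μ x))) := by
        have hc : ContinuousAt (fun s' => L x s') s := (hLd x s).continuousAt
        filter_upwards [hc.eventually (eventually_gt_nhds hLp)] with s' hs'
        rw [Real.log_div hs'.ne' hμx.ne']
      have h2 := h1.congr_of_eventuallyEq hev
      exact h2.congr_deriv (by rw [mul_inv_cancel_left₀ hLp.ne']; ring)
  -- second derivative of each term
  have hterm2 : ∀ x s, 0 < s → s < 1 →
      HasDerivAt (fun s' => δ x * (Real.log (L x s') - Real.log (μ x) + 1))
        (δ x ^ 2 / L x s) s := by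
    intro x s hs0 hs1
    by_cases hx : ν₀ x = 0 ∧ ν₁ x = 0
    · have hδ0 : δ x = 0 := by simp [hδdef, hx.1, hx.2]
      have he : (fun s' => δ x * (Real.log (L x s') - Real.log (μ x) + 1))
          = fun _ => (0 : ℝ) := by funext s'; rw [hδ0]; ring
      rw [he, hδ0]
      simpa using hasDerivAt_const s (0 : ℝ)
    · have hLp := hLpos x hx s hs0 hs1
      have hlog : HasDerivAt (fun s' => Real.log (L x s')) ((L x s)⁻¹ * δ x) s :=
        (Real.hasDerivAt_log hLp.ne').comp s (hLd x s)
      have h1 : HasDerivAt (fun s' => δ x * (Real.log (L x s') - Real.log (μ x) + 1))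
          (δ x * ((L x s)⁻¹ * δ x)) s :=
        ((hlog.sub_const _).add_const 1).const_mul (δ x)
      convert h1 using 1
      field_simp
  -- Cauchy-Schwarz: c ≤ ∑ δ²/L
  have hCS : ∀ s, 0 < s → s < 1 → c ≤ ∑ x, δ x ^ 2 / L x s := by
    intro s hs0 hs1
    have hsum : ∑ x, L x s = 1 := by
      simp only [hLdef]
      rw [Finset.sum_add_distrib, ← Finset.mul_sum, ← Finset.mul_sum, hν₀_sum, hν₁_sum]
      ring
    have hcs := Finset.sum_mul_sq_le_sq_mul_sq Finset.univ
      (fun x => Real.sqrt (L x s)) (fun x => |δ x| / Real.sqrt (L x s))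
    have h1 : ∀ x : V, Real.sqrt (L x s) * (|δ x| / Real.sqrt (L x s)) = |δ x| := by
      intro x
      rcases (hLnn x s hs0.le hs1.le).eq_or_lt with h | h
      · rw [hLzero x s hs0 hs1 h.symm]; simp
      · have hne : Real.sqrt (L x s) ≠ 0 := (Real.sqrt_pos.mpr h).ne'
        rw [mul_comm, div_mul_cancel₀ _ hne]
    have h2 : ∀ x : V, Real.sqrt (L x s) ^ 2 = L x s :=
      fun x => Real.sq_sqrt (hLnn x s hs0.le hs1.le)
    have h3 : ∀ x : V, (|δ x| / Real.sqrt (L x s)) ^ 2 = δ x ^ 2 / L x s := by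
      intro x; rw [div_pow, sq_abs, h2]
    rw [Finset.sum_congr rfl (fun x _ => h1 x), Finset.sum_congr rfl (fun x _ => h2 x),
      Finset.sum_congr rfl (fun x _ => h3 x), hsum, one_mul] at hcs
    calc c = (∑ x, |δ x|) ^ 2 := by
            rw [hcdef]; congr 1
            exact Finset.sum_congr rfl fun x _ => by rw [hδdef]; exact abs_sub_comm _ _
      _ ≤ _ := hcs
  -- convexity of s ↦ g(s) - c s²/2 on [0,1]
  have hq : ∀ s : ℝ, HasDerivAt (fun s' : ℝ => c * s' ^ 2 / 2) (c * s) s := by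
    intro s
    have := ((hasDerivAt_pow 2 s).const_mul c).div_const 2
    exact this.congr_deriv (by rw [show (2:ℕ) - 1 = 1 from rfl]; push_cast; ring)
  have hconv : ConvexOn ℝ (Set.Icc (0 : ℝ) 1)
      (fun s => (∑ x, L x s * Real.log (L x s / μ x)) - c * s ^ 2 / 2) := by
    apply convexOn_of_hasDerivWithinAt2_nonneg (convex_Icc 0 1)
      (f' := fun s => (∑ x, δ x * (Real.log (L x s) - Real.log (μ x) + 1)) - c * s)
      (f'' := fun s => (∑ x, δ x ^ 2 / L x s) - c)
    · -- continuity
      apply ContinuousOn.sub _ (Continuous.continuousOn (by fun_prop))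
      apply ContinuousOn.congr
        (f := fun s => ∑ x, (L x s * Real.log (L x s) - L x s * Real.log (μ x)))
      · apply Continuous.continuousOn
        apply continuous_finset_sum
        intro x _
        have hLc : Continuous fun s => L x s := by
          simp only [hLdef]; fun_prop
        exact (Real.continuous_mul_log.comp hLc).sub (hLc.mul continuous_const)
      · intro s hs
        refine Finset.sum_congr rfl fun x _ => ?_
        rcases (hLnn x s hs.1 hs.2).eq_or_lt with h | h
        · rw [← h]; simp
        · have hμx : 0 < μ x := by
            refine hboth x fun hx => ?_
            rw [show L x s = 0 from by simp [hLdef, hx.1, hx.2]] at h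
            exact lt_irrefl 0 h
          rw [Real.log_div h.ne' hμx.ne']
          ring
    · intro s hs
      rw [interior_Icc] at hs ⊢
      exact ((HasDerivAt.fun_sum fun x _ => hterm1 x s hs.1 hs.2).sub (hq s)).hasDerivWithinAt
    · intro s hs
      rw [interior_Icc] at hs ⊢
      have hlin : HasDerivAt (fun s' : ℝ => c * s') c s := by
        simpa using (hasDerivAt_id s).const_mul c
      exact ((HasDerivAt.fun_sum fun x _ => hterm2 x s hs.1 hs.2).sub hlin).hasDerivWithinAt
    · intro s hs
      rw [interior_Icc] at hs
      have := hCS s hs.1 hs.2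
      linarith
  -- apply convexity at t = (1-t)·0 + t·1
  have h2 := hconv.2 (Set.left_mem_Icc.mpr zero_le_one) (Set.right_mem_Icc.mpr zero_le_one)
    (sub_nonneg.mpr ht1) ht0 (by ring)
  simp only [smul_eq_mul, mul_zero, mul_one, zero_add] at h2
  have e0 : relEnt ν₀ μ = ∑ x, L x 0 * Real.log (L x 0 / μ x) := by
    simp [relEnt, hLdef]
  have e1 : relEnt ν₁ μ = ∑ x, L x 1 * Real.log (L x 1 / μ x) := by
    simp [relEnt, hLdef]
  have et : relEnt (fun x => (1 - t) * ν₀ x + t * ν₁ x) μ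
      = ∑ x, L x t * Real.log (L x t / μ x) := by
    simp [relEnt, hLdef]
  rw [e0, e1, et]
  nlinarith [h2]
end

section
/- For any two probability measures ν₀, ν₁ on a finite set V, the weak transport costs with Hamming cost satisfy T̃₂(ν₁|ν₀) + T̃₂(ν₀|ν₁) ≥ ‖ν₀−ν₁‖²_TV / (1 + ‖ν₀−ν₁‖_TV/2) ≥ (1/2)‖ν₀−ν₁‖²_TV. -/
open Finset

lemma weakT_aux {V : Type*} [Fintype V] (ν₀ ν₁ : V → ℝ)
    (hν₀ : ∀ x, 0 ≤ ν₀ x) (hν₁ : ∀ x, 0 ≤ ν₁ x) :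
    (∑ x, max (ν₀ x - ν₁ x) 0) ^ 2 /
      (∑ x ∈ univ.filter (fun x => ν₁ x < ν₀ x), ν₀ x) ≤ weakT ν₁ ν₀ := by
  set s := univ.filter (fun x => ν₁ x < ν₀ x) with hs
  have hpos : ∀ x ∈ s, 0 < ν₀ x := by
    intro x hx
    simp only [hs, mem_filter] at hx
    exact lt_of_le_of_lt (hν₁ x) hx.2
  have ha : (∑ x, max (ν₀ x - ν₁ x) 0) = ∑ x ∈ s, (ν₀ x - ν₁ x) := by
    rw [← Finset.sum_filter_add_sum_filter_not univ (fun x => ν₁ x < ν₀ x)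
      (fun x => max (ν₀ x - ν₁ x) 0)]
    have h1 : ∑ x ∈ univ.filter (fun x => ¬ ν₁ x < ν₀ x),
        max (ν₀ x - ν₁ x) 0 = 0 := by
      apply Finset.sum_eq_zero
      intro x hx
      simp only [mem_filter, not_lt] at hx
      simp [max_eq_right, sub_nonpos.mpr hx.2]
    rw [h1, add_zero]
    apply Finset.sum_congr rfl
    intro x hx
    simp only [hs, mem_filter] at hx
    rw [max_eq_left (sub_nonneg.mpr hx.2.le)]
  rw [ha]
  calc (∑ x ∈ s, (ν₀ x - ν₁ x)) ^ 2 / (∑ x ∈ s, ν₀ x)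
      ≤ ∑ x ∈ s, (ν₀ x - ν₁ x) ^ 2 / ν₀ x :=
        sq_sum_div_le_sum_sq_div s _ hpos
    _ ≤ weakT ν₁ ν₀ := by
        unfold weakT
        rw [← Finset.sum_filter_add_sum_filter_not univ (fun x => ν₁ x < ν₀ x)
          (fun x => max (1 - ν₁ x / ν₀ x) 0 ^ 2 * ν₀ x)]
        have h2 : ∑ x ∈ s, (ν₀ x - ν₁ x) ^ 2 / ν₀ x =
            ∑ x ∈ s, max (1 - ν₁ x / ν₀ x) 0 ^ 2 * ν₀ x := by
          apply Finset.sum_congr rfl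
          intro x hx
          have h0 := hpos x hx
          simp only [hs, mem_filter] at hx
          rw [max_eq_left]
          · field_simp
          · rw [sub_nonneg]
            exact div_le_one_of_le₀ hx.2.le h0.le
        rw [h2]
        have : 0 ≤ ∑ x ∈ univ.filter (fun x => ¬ ν₁ x < ν₀ x),
            max (1 - ν₁ x / ν₀ x) 0 ^ 2 * ν₀ x :=
          Finset.sum_nonneg fun x _ => mul_nonneg (sq_nonneg _) (hν₀ x)
        linarith

lemma weakT_nonneg {V : Type*} [Fintype V] (ν₁ ν₀ : V → ℝ) (h : ∀ x, 0 ≤ ν₀ x) :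
    0 ≤ weakT ν₁ ν₀ :=
  Finset.sum_nonneg fun x _ => mul_nonneg (sq_nonneg _) (h x)

/-- comparison between the symmetrized weak transport cost and the
total variation distance:
`T̃₂(ν₁|ν₀) + T̃₂(ν₀|ν₁) ≥ ‖ν₀−ν₁‖²_TV / (1 + ‖ν₀−ν₁‖_TV/2) ≥ ½ ‖ν₀−ν₁‖²_TV`. -/
theorem weakTransport_ge_TV {V : Type*} [Fintype V]
    (ν₀ ν₁ : V → ℝ)
    (hν₀_pos : ∀ x, 0 ≤ ν₀ x) (hν₀_sum : ∑ x, ν₀ x = 1)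
    (hν₁_pos : ∀ x, 0 ≤ ν₁ x) (hν₁_sum : ∑ x, ν₁ x = 1) :
    weakT ν₁ ν₀ + weakT ν₀ ν₁ ≥
      (∑ x, |ν₀ x - ν₁ x|) ^ 2 / (1 + (∑ x, |ν₀ x - ν₁ x|) / 2) ∧
    (∑ x, |ν₀ x - ν₁ x|) ^ 2 / (1 + (∑ x, |ν₀ x - ν₁ x|) / 2) ≥
      (1 / 2) * (∑ x, |ν₀ x - ν₁ x|) ^ 2 := by
  classical
  set a := ∑ x, max (ν₀ x - ν₁ x) 0 with ha
  set b := ∑ x, max (ν₁ x - ν₀ x) 0 with hb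
  have hab : a = b := by
    have : a - b = ∑ x, (ν₀ x - ν₁ x) := by
      rw [ha, hb, ← Finset.sum_sub_distrib]
      apply Finset.sum_congr rfl
      intro x _
      rcases le_total (ν₀ x) (ν₁ x) with h | h
      · rw [max_eq_right (by linarith), max_eq_left (by linarith)]; ring
      · rw [max_eq_left (by linarith), max_eq_right (by linarith)]; ring
    rw [Finset.sum_sub_distrib, hν₀_sum, hν₁_sum] at this
    linarith
  have hd : (∑ x, |ν₀ x - ν₁ x|) = 2 * a := by
    have : ∀ x, |ν₀ x - ν₁ x| = max (ν₀ x - ν₁ x) 0 + max (ν₁ x - ν₀ x) 0 := by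
      intro x
      rcases le_total (ν₀ x) (ν₁ x) with h | h
      · rw [abs_of_nonpos (by linarith), max_eq_right (by linarith),
          max_eq_left (by linarith)]; ring
      · rw [abs_of_nonneg (by linarith), max_eq_left (by linarith),
          max_eq_right (by linarith)]; ring
    rw [Finset.sum_congr rfl fun x _ => this x, Finset.sum_add_distrib, ← ha, ← hb, hab]
    ring
  have ha_nonneg : 0 ≤ a := Finset.sum_nonneg fun x _ => le_max_right _ _
  have ha_le : a ≤ 1 := by
    rw [ha, ← hν₀_sum]
    apply Finset.sum_le_sum
    intro x _
    exact max_le (by linarith [hν₁_pos x]) (hν₀_pos x)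
  set S₀ := ∑ x ∈ univ.filter (fun x => ν₁ x < ν₀ x), ν₀ x with hS₀
  set S₁ := ∑ x ∈ univ.filter (fun x => ν₀ x < ν₁ x), ν₁ x with hS₁
  have haS₀ : a ≤ S₀ := by
    rw [ha, hS₀, ← Finset.sum_filter_add_sum_filter_not univ (fun x => ν₁ x < ν₀ x)
      (fun x => max (ν₀ x - ν₁ x) 0)]
    have h1 : ∑ x ∈ univ.filter (fun x => ¬ ν₁ x < ν₀ x), max (ν₀ x - ν₁ x) 0 = 0 := by
      apply Finset.sum_eq_zero
      intro x hx
      simp only [mem_filter, not_lt] at hx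
      simp [max_eq_right, sub_nonpos.mpr hx.2]
    rw [h1, add_zero]
    apply Finset.sum_le_sum
    intro x _
    exact max_le (by linarith [hν₁_pos x]) (hν₀_pos x)
  have haS₁ : a ≤ S₁ := by
    rw [hab, hb, hS₁, ← Finset.sum_filter_add_sum_filter_not univ (fun x => ν₀ x < ν₁ x)
      (fun x => max (ν₁ x - ν₀ x) 0)]
    have h1 : ∑ x ∈ univ.filter (fun x => ¬ ν₀ x < ν₁ x), max (ν₁ x - ν₀ x) 0 = 0 := by
      apply Finset.sum_eq_zero
      intro x hx
      simp only [mem_filter, not_lt] at hx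
      simp [max_eq_right, sub_nonpos.mpr hx.2]
    rw [h1, add_zero]
    apply Finset.sum_le_sum
    intro x _
    exact max_le (by linarith [hν₀_pos x]) (hν₁_pos x)
  have hSsum : S₀ + S₁ ≤ 1 + a := by
    have h1 : S₀ = (∑ x ∈ univ.filter (fun x => ν₁ x < ν₀ x), ν₁ x) + a := by
      have : a = ∑ x ∈ univ.filter (fun x => ν₁ x < ν₀ x), (ν₀ x - ν₁ x) := by
        rw [ha, ← Finset.sum_filter_add_sum_filter_not univ (fun x => ν₁ x < ν₀ x)
          (fun x => max (ν₀ x - ν₁ x) 0)]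
        have hz : ∑ x ∈ univ.filter (fun x => ¬ ν₁ x < ν₀ x), max (ν₀ x - ν₁ x) 0 = 0 := by
          apply Finset.sum_eq_zero
          intro x hx
          simp only [mem_filter, not_lt] at hx
          simp [max_eq_right, sub_nonpos.mpr hx.2]
        rw [hz, add_zero]
        apply Finset.sum_congr rfl
        intro x hx
        simp only [mem_filter] at hx
        rw [max_eq_left (sub_nonneg.mpr hx.2.le)]
      rw [this, hS₀, ← Finset.sum_add_distrib]
      apply Finset.sum_congr rfl
      intro x _; ring
    have h2 : (∑ x ∈ univ.filter (fun x => ν₁ x < ν₀ x), ν₁ x) + S₁ ≤ 1 := by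
      rw [hS₁, ← hν₁_sum]
      rw [← Finset.sum_union]
      · apply Finset.sum_le_sum_of_subset_of_nonneg (Finset.subset_univ _)
        intro x _ _; exact hν₁_pos x
      · rw [Finset.disjoint_filter]
        intro x _ h1' h2'
        exact absurd h1' (not_lt.mpr h2'.le)
    linarith
  rcases eq_or_lt_of_le ha_nonneg with h0 | hapos
  · constructor
    · rw [hd, ← h0]
      norm_num
      linarith [weakT_nonneg ν₁ ν₀ hν₀_pos, weakT_nonneg ν₀ ν₁ hν₁_pos]
    · rw [hd, ← h0]; norm_num
  · have hS₀pos : 0 < S₀ := lt_of_lt_of_le hapos haS₀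
    have hS₁pos : 0 < S₁ := lt_of_lt_of_le hapos haS₁
    have key1 : a ^ 2 / S₀ ≤ weakT ν₁ ν₀ := weakT_aux ν₀ ν₁ hν₀_pos hν₁_pos
    have key2 : a ^ 2 / S₁ ≤ weakT ν₀ ν₁ := by
      have := weakT_aux ν₁ ν₀ hν₁_pos hν₀_pos
      rw [← hb, ← hab] at this
      exact this
    constructor
    · have h3 : 4 * a ^ 2 / (S₀ + S₁) ≤ a ^ 2 / S₀ + a ^ 2 / S₁ := by
        rw [div_add_div _ _ (ne_of_gt hS₀pos) (ne_of_gt hS₁pos), div_le_div_iff₀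
          (by positivity) (by positivity)]
        nlinarith [sq_nonneg (S₀ - S₁), sq_nonneg a]
      have h4 : 4 * a ^ 2 / (1 + a) ≤ 4 * a ^ 2 / (S₀ + S₁) :=
        div_le_div_of_nonneg_left (by positivity) (by linarith) hSsum
      have h5 : (∑ x, |ν₀ x - ν₁ x|) ^ 2 / (1 + (∑ x, |ν₀ x - ν₁ x|) / 2)
          = 4 * a ^ 2 / (1 + a) := by
        rw [hd]; ring_nf
      rw [ge_iff_le, h5]
      linarith
    · rw [ge_iff_le, hd]
      have h6 : (0:ℝ) < 1 + 2 * a / 2 := by linarith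
      rw [le_div_iff₀ h6]
      nlinarith
end

section
/- HWI inequality on the complete graph: let μ be the uniform measure on the complete graph K_n and f : K_n → (0,∞) with ∑_x f(x)μ(x) = 1. Then Ent_μ(f) ≤ E_μ(f, log f) − (1/2)(T̃₂(μ|fμ) + T̃₂(fμ|μ)), where E_μ(f, log f) = (1/2)∑_{x,y} (f(y)−f(x))(log f(y) − log f(x)) μ(x)μ(y). -/
open Finset

lemma lemA_s17 (t : ℝ) (ht : 1 ≤ t) : 2 * Real.log t ≤ t - 1/t := by
  have ht0 : (0:ℝ) < t := lt_of_lt_of_le one_pos ht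
  have hx : 0 ≤ Real.log t := Real.log_nonneg ht
  have hs : Real.log t ≤ Real.sinh (Real.log t) := Real.self_le_sinh_iff.2 hx
  rw [Real.sinh_eq] at hs
  rw [Real.exp_log ht0, Real.exp_neg, Real.exp_log ht0] at hs
  have : (1:ℝ)/t = t⁻¹ := one_div t
  linarith

lemma lemB_s17 (t : ℝ) (ht : 0 < t) (h1 : t ≤ 1) : (1 - t)^2 ≤ 2*(t-1) - 2*Real.log t := by
  set g : ℝ → ℝ := fun y => 2*y - 3 + 4*Real.exp (-y) - Real.exp (-(2*y)) with hg
  have hderiv : ∀ y : ℝ, HasDerivAt g (2 - 4*Real.exp (-y) + 2*Real.exp (-(2*y))) y := by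
    intro y
    have h1' : HasDerivAt (fun y:ℝ => -y) (-1) y := (hasDerivAt_id y).neg
    have h2 : HasDerivAt (fun y:ℝ => Real.exp (-y)) (Real.exp (-y) * (-1)) y := h1'.exp
    have h3 : HasDerivAt (fun y:ℝ => -(2*y)) (-2) y := by
      have h := ((hasDerivAt_id y).const_mul (2:ℝ)).neg
      simp only [id, mul_one] at h
      exact h
    have h4 : HasDerivAt (fun y:ℝ => Real.exp (-(2*y))) (Real.exp (-(2*y)) * (-2)) y := h3.exp
    have hA : HasDerivAt (fun y:ℝ => 2*y - 3) 2 y := by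
      simpa using ((hasDerivAt_id y).const_mul (2:ℝ)).sub_const 3
    have hB : HasDerivAt (fun y:ℝ => 4 * Real.exp (-y)) (4 * (Real.exp (-y) * (-1))) y :=
      h2.const_mul 4
    have := (hA.add hB).sub h4
    exact this.congr_deriv (by ring)
  have hmono : Monotone g := by
    apply monotone_of_deriv_nonneg
    · exact fun y => (hderiv y).differentiableAt
    · intro y
      rw [(hderiv y).deriv]
      have he : Real.exp (-(2*y)) = Real.exp (-y) ^ 2 := by
        rw [show -(2*y) = (-y) + (-y) by ring, Real.exp_add]; ring
      nlinarith [sq_nonneg (1 - Real.exp (-y))]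
  set x : ℝ := -Real.log t with hxdef
  have hx : 0 ≤ x := by
    have := Real.log_nonpos ht.le h1
    simp only [hxdef]; linarith
  have hgx : g 0 ≤ g x := hmono hx
  have hg0 : g 0 = 0 := by simp [hg]; norm_num
  have het : Real.exp (-x) = t := by
    simp only [hxdef, neg_neg]; exact Real.exp_log ht
  have het2 : Real.exp (-(2*x)) = t^2 := by
    rw [show -(2*x) = (-x) + (-x) by ring, Real.exp_add, het]; ring
  have hlog : Real.log t = -x := by simp [hxdef]
  rw [hg0] at hgx
  simp only [hg, het, het2] at hgx
  rw [hlog]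
  nlinarith [hgx]

lemma pointwise (t : ℝ) (ht : 0 < t) :
    t * max (1 - 1/t) 0 ^ 2 + max (1 - t) 0 ^ 2 ≤ 2*(t-1) - 2 * Real.log t := by
  rcases le_or_gt 1 t with h | h
  · have hm2 : max (1 - t) 0 = 0 := max_eq_right (by linarith)
    have h1t : 1/t ≤ 1 := by rw [div_le_one ht]; exact h
    have hm1 : max (1 - 1/t) 0 = 1 - 1/t := max_eq_left (by linarith)
    rw [hm1, hm2]
    have hA := lemA_s17 t h
    have hkey : t * (1 - 1/t)^2 = t - 2 + 1/t := by
      field_simp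
      ring
    rw [hkey]
    have : (0:ℝ)^2 = 0 := by norm_num
    rw [this]
    linarith
  · have h1t : 1 ≤ 1/t := by rw [le_div_iff₀ ht]; linarith
    have hm1 : max (1 - 1/t) 0 = 0 := max_eq_right (by linarith)
    have hm2 : max (1 - t) 0 = 1 - t := max_eq_left (by linarith)
    rw [hm1, hm2]
    have hB := lemB_s17 t ht h.le
    have : (0:ℝ)^2 = 0 := by norm_num
    rw [this]
    linarith

/-- HWI type inequality on the complete graph `K_n` with uniform measure
`μ ≡ 1/n`: for a positive density `f`,
`Ent_μ(f) ≤ E_μ(f, log f) − ½(T̃₂(μ|fμ) + T̃₂(fμ|μ))`, where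
`E_μ(f, log f) = ½ ∑_{x,y} (f(y)−f(x))(log f(y)−log f(x)) μ(x)μ(y)`. -/
theorem hwi_complete_graph (n : ℕ) (hn : 1 ≤ n)
    (f : Fin n → ℝ) (hf_pos : ∀ x, 0 < f x)
    (hf_sum : ∑ x, f x * ((1 : ℝ) / n) = 1) :
    ∑ x, f x * Real.log (f x) * ((1 : ℝ) / n) ≤
      (1 / 2) * ∑ x, ∑ y,
          (f y - f x) * (Real.log (f y) - Real.log (f x)) * ((1 : ℝ) / n) * ((1 : ℝ) / n)
        - (1 / 2) * (weakT (fun _ => (1 : ℝ) / n) (fun x => f x * ((1 : ℝ) / n)) +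
            weakT (fun x => f x * ((1 : ℝ) / n)) (fun _ => (1 : ℝ) / n)) := by
  have hn0 : (0:ℝ) < (n:ℝ) := by exact_mod_cast Nat.lt_of_lt_of_le Nat.zero_lt_one hn
  set c : ℝ := (1:ℝ)/(n:ℝ) with hc
  have hcpos : 0 < c := by positivity
  have h1 : ∑ _x : Fin n, c = 1 := by
    rw [Finset.sum_const, Finset.card_univ, Fintype.card_fin, nsmul_eq_mul, hc]
    field_simp
  -- double sum identity
  have hd : ∑ x, ∑ y, (f y - f x) * (Real.log (f y) - Real.log (f x)) * c * c
      = (∑ x, f x * Real.log (f x) * c) * (∑ _y : Fin n, c)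
        + (∑ _x : Fin n, c) * (∑ y, f y * Real.log (f y) * c)
        - (∑ x, f x * c) * (∑ y, Real.log (f y) * c)
        - (∑ x, Real.log (f x) * c) * (∑ y, f y * c) := by
    simp only [Finset.sum_mul_sum, ← Finset.sum_sub_distrib, ← Finset.sum_add_distrib]
    exact Finset.sum_congr rfl fun x _ => Finset.sum_congr rfl fun y _ => by ring
  rw [h1, hf_sum] at hd
  -- weakT values
  have hw1 : weakT (fun _ => c) (fun x => f x * c) = ∑ x, max (1 - 1/f x) 0 ^ 2 * (f x * c) := by
    unfold weakT
    refine Finset.sum_congr rfl fun x _ => ?_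
    have : c / (f x * c) = 1 / f x := by
      rw [div_mul_eq_div_div_swap, div_self hcpos.ne']
    rw [this]
  have hw2 : weakT (fun x => f x * c) (fun _ => c) = ∑ x, max (1 - f x) 0 ^ 2 * c := by
    unfold weakT
    refine Finset.sum_congr rfl fun x _ => ?_
    rw [mul_div_cancel_right₀ _ hcpos.ne']
  -- pointwise bound summed
  have hb : ∑ x, (max (1 - 1/f x) 0 ^ 2 * (f x * c) + max (1 - f x) 0 ^ 2 * c)
      ≤ ∑ x, (2*(f x - 1) - 2*Real.log (f x)) * c := by
    refine Finset.sum_le_sum fun x _ => ?_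
    have hp := pointwise (f x) (hf_pos x)
    have h2 := mul_le_mul_of_nonneg_right hp hcpos.le
    have heq : max (1 - 1/f x) 0 ^ 2 * (f x * c) + max (1 - f x) 0 ^ 2 * c
        = (f x * max (1 - 1/f x) 0 ^ 2 + max (1 - f x) 0 ^ 2) * c := by ring
    rw [heq]
    exact h2
  have hb2 : ∑ x, (2*(f x - 1) - 2*Real.log (f x))*c
      = 2 * (∑ x, f x * c) - 2 * (∑ _x : Fin n, c) - 2 * (∑ x, Real.log (f x) * c) := by
    rw [Finset.mul_sum, Finset.mul_sum, Finset.mul_sum, ← Finset.sum_sub_distrib,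
      ← Finset.sum_sub_distrib]
    exact Finset.sum_congr rfl fun x _ => by ring
  rw [hf_sum, h1] at hb2
  rw [Finset.sum_add_distrib] at hb
  rw [hw1, hw2, hd]
  linarith [hb, hb2]
end
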